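/- arXiv:1506.07124 — 3 statements merged into one kernel-verified Lean document; each statement's English description precedes it below -/
import Mathlib

section
/- Let P (n×ℓ) and Q (n×m) be joint probability matrices with columns sorted nonincreasingly, and let L be the n×n all-ones lower triangular matrix. Then P ≻_c Q if and only if there exists a nonnegative vector t ∈ ℝ^{ℓm} (representing the columns of an ℓ×m matrix T) satisfying the linear system Γt ≤ b, where Γ is the block matrix with m diagonal blocks −LP and a bottom block row of ℓ×ℓ identity matrices, and b stacks −Lq₁,...,−Lq_m and the all-ones ℓ-vector. (Equivalently: there exists T with nonnegative entries, row sums at most 1, and LQ ≤ LPT entrywise.) -/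
open Matrix Finset

/-- Row-stochastic matrix: nonnegative entries, each row sums to 1. -/
def RowStoch {ℓ m : ℕ} (T : Matrix (Fin ℓ) (Fin m) ℝ) : Prop :=
  (∀ y w, 0 ≤ T y w) ∧ ∀ y, ∑ w, T y w = 1

/-- Doubly stochastic matrix. -/
def DStoch {n : ℕ} (D : Matrix (Fin n) (Fin n) ℝ) : Prop :=
  (∀ i j, 0 ≤ D i j) ∧ (∀ i, ∑ j, D i j = 1) ∧ (∀ j, ∑ i, D i j = 1)

/-- Conditional majorization `P ≻_c Q` via classical-conditioned random relabelings:
`Q = ∑ j, D j * P * R j` with each `D j` doubly stochastic, each `R j` entrywise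
nonnegative, and `∑ j, R j` row-stochastic. -/
def CondMaj {n ℓ m : ℕ} (P : Matrix (Fin n) (Fin ℓ) ℝ)
    (Q : Matrix (Fin n) (Fin m) ℝ) : Prop :=
  ∃ (J : ℕ) (D : Fin J → Matrix (Fin n) (Fin n) ℝ)
    (R : Fin J → Matrix (Fin ℓ) (Fin m) ℝ),
    (∀ j, DStoch (D j)) ∧ (∀ j y w, 0 ≤ R j y w) ∧
    RowStoch (∑ j, R j) ∧ Q = ∑ j, D j * P * R j

/-- Joint probability matrix: nonnegative entries summing to one. -/
def JointProb {n ℓ : ℕ} (P : Matrix (Fin n) (Fin ℓ) ℝ) : Prop :=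
  (∀ x y, 0 ≤ P x y) ∧ ∑ x, ∑ y, P x y = 1

/-- Column sum (marginal). -/
noncomputable def ColSum {n m : ℕ} (Q : Matrix (Fin n) (Fin m) ℝ) (w : Fin m) : ℝ :=
  ∑ x, Q x w
/-- The lower-triangular matrix of ones on and below the diagonal. -/
noncomputable def Lmat (n : ℕ) : Matrix (Fin n) (Fin n) ℝ :=
  Matrix.of fun i j => if j ≤ i then (1 : ℝ) else 0


noncomputable def psum {n : ℕ} (f : Fin n → ℝ) (K : ℕ) : ℝ :=
  ∑ t ∈ univ.filter (fun t : Fin n => (t : ℕ) < K), f t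

lemma psum_zero {n : ℕ} (f : Fin n → ℝ) : psum f 0 = 0 := by
  simp [psum]

lemma psum_succ {n : ℕ} (f : Fin n → ℝ) (K : ℕ) :
    psum f (K + 1) = psum f K + (if h : K < n then f ⟨K, h⟩ else 0) := by
  unfold psum
  split
  · rename_i h
    rw [show (univ.filter (fun t : Fin n => (t : ℕ) < K + 1)) =
        insert ⟨K, h⟩ (univ.filter (fun t : Fin n => (t : ℕ) < K)) by
      ext t; simp [Nat.lt_succ_iff_lt_or_eq, Fin.ext_iff, or_comm]; omega]
    rw [Finset.sum_insert (by simp)]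
    ring
  · rename_i h
    rw [show (univ.filter (fun t : Fin n => (t : ℕ) < K + 1)) =
        (univ.filter (fun t : Fin n => (t : ℕ) < K)) by
      ext t; simp; omega]
    ring

lemma psum_of_ge {n : ℕ} (f : Fin n → ℝ) (K : ℕ) (h : n ≤ K) :
    psum f K = ∑ t, f t := by
  unfold psum
  congr 1
  ext t; simp; omega

lemma DStoch_one {n : ℕ} : DStoch (1 : Matrix (Fin n) (Fin n) ℝ) := by
  refine ⟨?_, ?_, ?_⟩
  · intro i j; by_cases h : i = j <;> simp [Matrix.one_apply, h]
  · intro i; simp [Matrix.one_apply]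
  · intro j; simp [Matrix.one_apply]

lemma DStoch_mul {n : ℕ} {A B : Matrix (Fin n) (Fin n) ℝ} (hA : DStoch A) (hB : DStoch B) :
    DStoch (A * B) := by
  obtain ⟨hA0, hA1, hA2⟩ := hA
  obtain ⟨hB0, hB1, hB2⟩ := hB
  refine ⟨?_, ?_, ?_⟩
  · intro i j
    rw [Matrix.mul_apply]
    exact Finset.sum_nonneg fun k _ => mul_nonneg (hA0 i k) (hB0 k j)
  · intro i
    simp only [Matrix.mul_apply]
    rw [Finset.sum_comm]
    calc ∑ k, ∑ j, A i k * B k j = ∑ k, A i k * ∑ j, B k j := by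
          simp [Finset.mul_sum]
      _ = 1 := by simp [hB1, hA1]
  · intro j
    simp only [Matrix.mul_apply]
    calc ∑ i, ∑ k, A i k * B k j = ∑ k, (∑ i, A i k) * B k j := by
          rw [Finset.sum_comm]; simp [Finset.sum_mul]
      _ = 1 := by simp [hA2, hB2]
lemma sum_two_ite {n : ℕ} (a b : Fin n) (hab : a ≠ b) (c d : ℝ) :
    ∑ i' : Fin n, (if i' = a then c else if i' = b then d else 0) = c + d := by
  have : ∀ i' : Fin n, (if i' = a then c else if i' = b then d else 0)
      = (if i' = a then c else 0) + (if i' = b then d else 0) := by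
    intro i'
    by_cases h1 : i' = a
    · subst h1; rw [if_pos rfl, if_pos rfl, if_neg hab, add_zero]
    · rw [if_neg h1, if_neg h1, zero_add]
  rw [Finset.sum_congr rfl fun i _ => this i, Finset.sum_add_distrib,
    Finset.sum_ite_eq' univ a (fun _ => c), Finset.sum_ite_eq' univ b (fun _ => d)]
  simp

noncomputable def Tmat {n : ℕ} (j k : Fin n) (lam : ℝ) : Matrix (Fin n) (Fin n) ℝ :=
  Matrix.of fun i i' =>
    if i = j then (if i' = j then lam else if i' = k then 1 - lam else 0)
    else if i = k then (if i' = k then lam else if i' = j then 1 - lam else 0)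
    else if i' = i then 1 else 0

lemma Tmat_symm {n : ℕ} (j k : Fin n) (lam : ℝ) (hjk : j ≠ k) (i i' : Fin n) :
    Tmat j k lam i i' = Tmat j k lam i' i := by
  unfold Tmat
  simp only [Matrix.of_apply]
  by_cases h1 : i = j <;> by_cases h2 : i = k <;> by_cases h3 : i' = j <;>
    by_cases h4 : i' = k <;>
    simp only [h1, h2, h3, h4, if_pos, if_neg, if_true, if_false, eq_comm] <;>
    first
      | rfl
      | (subst_vars; simp_all [eq_comm])
      | (exfalso; exact hjk (h1 ▸ h2 ▸ rfl))

lemma Tmat_row {n : ℕ} (j k : Fin n) (lam : ℝ) (hjk : j ≠ k) (i : Fin n) :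
    ∑ i', Tmat j k lam i i' = 1 := by
  unfold Tmat
  simp only [Matrix.of_apply]
  by_cases hij : i = j
  · rw [Finset.sum_congr rfl fun i' _ => by rw [if_pos hij]]
    rw [sum_two_ite j k hjk lam (1 - lam)]; ring
  · by_cases hik : i = k
    · rw [Finset.sum_congr rfl fun i' _ => by rw [if_neg hij, if_pos hik]]
      rw [sum_two_ite k j (Ne.symm hjk) lam (1 - lam)]; ring
    · rw [Finset.sum_congr rfl fun i' _ => by rw [if_neg hij, if_neg hik]]
      simp

lemma Tmat_col {n : ℕ} (j k : Fin n) (lam : ℝ) (hjk : j ≠ k) (i' : Fin n) :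
    ∑ i, Tmat j k lam i i' = 1 := by
  rw [Finset.sum_congr rfl fun i _ => Tmat_symm j k lam hjk i i']
  exact Tmat_row j k lam hjk i'

lemma Tmat_nonneg {n : ℕ} (j k : Fin n) (lam : ℝ)
    (h0 : 0 ≤ lam) (h1 : lam ≤ 1) (i i' : Fin n) : 0 ≤ Tmat j k lam i i' := by
  unfold Tmat
  simp only [Matrix.of_apply]
  split_ifs <;> linarith

lemma Tmat_DStoch {n : ℕ} (j k : Fin n) (lam : ℝ) (hjk : j ≠ k)
    (h0 : 0 ≤ lam) (h1 : lam ≤ 1) : DStoch (Tmat j k lam) :=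
  ⟨Tmat_nonneg j k lam h0 h1, Tmat_row j k lam hjk, Tmat_col j k lam hjk⟩

lemma Tmat_mulVec {n : ℕ} (j k : Fin n) (lam : ℝ) (hjk : j ≠ k) (y : Fin n → ℝ) (i : Fin n) :
    ∑ i', Tmat j k lam i i' * y i' =
      if i = j then lam * y j + (1 - lam) * y k
      else if i = k then lam * y k + (1 - lam) * y j
      else y i := by
  unfold Tmat
  simp only [Matrix.of_apply]
  by_cases hij : i = j
  · rw [if_pos hij]
    have hcongr : ∀ i' : Fin n,
        (if i = j then (if i' = j then lam else if i' = k then 1 - lam else 0)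
          else if i = k then (if i' = k then lam else if i' = j then 1 - lam else 0)
          else if i' = i then 1 else 0) * y i'
        = (if i' = j then lam * y j else if i' = k then (1 - lam) * y k else 0) := by
      intro i'
      rw [if_pos hij]
      split_ifs with h1 h2 <;> first | (subst_vars; ring) | ring
    rw [Finset.sum_congr rfl fun i' _ => hcongr i']
    exact sum_two_ite j k hjk (lam * y j) ((1 - lam) * y k)
  · rw [if_neg hij]
    by_cases hik : i = k
    · rw [if_pos hik]
      have hcongr : ∀ i' : Fin n,
          (if i = j then (if i' = j then lam else if i' = k then 1 - lam else 0)
            else if i = k then (if i' = k then lam else if i' = j then 1 - lam else 0)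
            else if i' = i then 1 else 0) * y i'
          = (if i' = k then lam * y k else if i' = j then (1 - lam) * y j else 0) := by
        intro i'
        rw [if_neg hij, if_pos hik]
        split_ifs with h1 h2 <;> first | (subst_vars; ring) | ring
      rw [Finset.sum_congr rfl fun i' _ => hcongr i']
      exact sum_two_ite k j (Ne.symm hjk) (lam * y k) ((1 - lam) * y j)
    · rw [if_neg hik]
      rw [Finset.sum_congr rfl fun i' _ => by rw [if_neg hij, if_neg hik]]
      simp
lemma sum_sub_nonneg_all {n : ℕ} (x y : Fin n → ℝ) (h : ∀ i, y i ≤ x i)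
    (htot : ∑ i, x i = ∑ i, y i) : ∀ i, x i = y i := by
  have hz : ∑ i, (x i - y i) = 0 := by
    rw [Finset.sum_sub_distrib, htot, sub_self]
  intro i
  have := (Finset.sum_eq_zero_iff_of_nonneg (fun t _ => sub_nonneg.mpr (h t))).mp hz i (mem_univ i)
  linarith

lemma hlp_aux {n : ℕ} : ∀ (N : ℕ) (x y : Fin n → ℝ),
    (∀ i j : Fin n, i ≤ j → x j ≤ x i) → (∀ i j : Fin n, i ≤ j → y j ≤ y i) →
    (∀ K : ℕ, psum x K ≤ psum y K) → (∑ i, x i = ∑ i, y i) →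
    (univ.filter (fun i => x i ≠ y i)).card ≤ N →
    ∃ D, DStoch D ∧ ∀ i, x i = ∑ i', D i i' * y i' := by
  intro N
  induction N with
  | zero =>
    intro x y _ _ _ _ hcard
    have hxy : ∀ i, x i = y i := by
      intro i
      by_contra h
      have hm : i ∈ univ.filter (fun i => x i ≠ y i) := by simp [h]
      have := Finset.card_pos.mpr ⟨i, hm⟩
      omega
    refine ⟨1, DStoch_one, fun i => ?_⟩
    simp [Matrix.one_apply, hxy i]
  | succ N ih =>
    intro x y hx hy hdom htot hcard
    by_cases hxy : ∀ i, x i = y i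
    · refine ⟨1, DStoch_one, fun i => ?_⟩
      simp [Matrix.one_apply, hxy i]
    have hS1ne : (univ.filter (fun i => x i < y i)).Nonempty := by
      by_contra h
      rw [Finset.not_nonempty_iff_eq_empty] at h
      have hge : ∀ i, y i ≤ x i := by
        intro i
        by_contra h2
        have hm : i ∈ univ.filter (fun i => x i < y i) := by
          simp only [Finset.mem_filter, mem_univ, true_and]; linarith
        simp [h] at hm
      exact hxy (sum_sub_nonneg_all x y hge htot)
    set j := (univ.filter (fun i => x i < y i)).max' hS1ne with hjdef
    have hj : x j < y j := by
      have hm := (univ.filter (fun i => x i < y i)).max'_mem hS1ne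
      rw [Finset.mem_filter] at hm
      exact hm.2
    have hjmax : ∀ t, j < t → y t ≤ x t := by
      intro t ht
      by_contra h2
      have h3 : t ∈ univ.filter (fun i => x i < y i) := by
        simp only [Finset.mem_filter, mem_univ, true_and]; linarith
      exact absurd (Finset.le_max' _ t h3) (not_le.mpr ht)
    have hpj : psum x ((j : ℕ) + 1) + (y j - x j) ≤ psum y ((j : ℕ) + 1) := by
      rw [psum_succ, psum_succ]
      have hjn : (j : ℕ) < n := j.isLt
      rw [dif_pos hjn, dif_pos hjn]
      have hje : (⟨(j : ℕ), hjn⟩ : Fin n) = j := by ext; rfl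
      rw [hje]
      have := hdom (j : ℕ)
      linarith
    have hS2ne : (univ.filter (fun t => j < t ∧ y t < x t)).Nonempty := by
      by_contra h
      rw [Finset.not_nonempty_iff_eq_empty] at h
      have hge : ∀ t, j < t → x t ≤ y t := by
        intro t ht
        by_contra h2
        have hm : t ∈ univ.filter (fun t => j < t ∧ y t < x t) := by
          simp only [Finset.mem_filter, mem_univ, true_and]
          exact ⟨ht, by linarith⟩
        simp [h] at hm
      have hsplit := Finset.sum_filter_add_sum_filter_not univ
        (fun t : Fin n => (t : ℕ) < (j : ℕ) + 1) (fun t => y t - x t)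
      have htot0 : ∑ t, (y t - x t) = 0 := by
        rw [Finset.sum_sub_distrib, htot, sub_self]
      have hrest : 0 ≤ ∑ t ∈ univ.filter (fun t : Fin n => ¬((t : ℕ) < (j : ℕ) + 1)), (y t - x t) := by
        apply Finset.sum_nonneg
        intro t ht
        simp only [Finset.mem_filter, mem_univ, true_and, not_lt] at ht
        have hjt : j < t := by
          rw [Fin.lt_def]; omega
        linarith [hge t hjt]
      have hpre : 0 < ∑ t ∈ univ.filter (fun t : Fin n => (t : ℕ) < (j : ℕ) + 1), (y t - x t) := by
        have h1 : ∑ t ∈ univ.filter (fun t : Fin n => (t : ℕ) < (j : ℕ) + 1), (y t - x t)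
            = psum y ((j : ℕ) + 1) - psum x ((j : ℕ) + 1) := by
          unfold psum; rw [Finset.sum_sub_distrib]
        rw [h1]
        linarith
      linarith [hsplit]
    set k := (univ.filter (fun t => j < t ∧ y t < x t)).min' hS2ne with hkdef
    have hk' : j < k ∧ y k < x k := by
      have hm := (univ.filter (fun t => j < t ∧ y t < x t)).min'_mem hS2ne
      rw [Finset.mem_filter] at hm
      exact hm.2
    obtain ⟨hjk, hk⟩ := hk'
    have hkmin : ∀ t, j < t → y t < x t → k ≤ t := by
      intro t h1 h2
      apply Finset.min'_le
      simp only [Finset.mem_filter, mem_univ, true_and]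
      exact ⟨h1, h2⟩
    have hbetween : ∀ t, j < t → t < k → x t = y t := by
      intro t h1 h2
      rcases eq_or_lt_of_le (hjmax t h1) with h | h
      · exact h.symm
      · exact absurd (hkmin t h1 h) (not_le.mpr h2)
    set δ := min (y j - x j) (x k - y k) with hδdef
    have hδ : 0 < δ := lt_min (by linarith) (by linarith)
    have hxkj : x k ≤ x j := hx j k (le_of_lt hjk)
    have hδ1 : δ ≤ y j - x j := min_le_left _ _
    have hδ2 : δ ≤ x k - y k := min_le_right _ _
    have hden : 0 < y j - y k := by linarith
    set lam := 1 - δ / (y j - y k) with hlamdef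
    have h0lam : 0 ≤ lam := by
      rw [hlamdef]
      have h1 : δ / (y j - y k) ≤ 1 := by
        rw [div_le_one hden]; linarith
      linarith
    have h1lam : lam ≤ 1 := by
      rw [hlamdef]
      have h1 : 0 ≤ δ / (y j - y k) := le_of_lt (div_pos hδ hden)
      linarith
    have hjkne : j ≠ k := ne_of_lt hjk
    set y' := fun i => if i = j then y j - δ else if i = k then y k + δ else y i with hy'def
    have hxj_le : x j ≤ y j - δ := by linarith
    have hk_le : y k + δ ≤ x k := by linarith
    have hy'j : y' j = y j - δ := by rw [hy'def]; simp
    have hy'k : y' k = y k + δ := by rw [hy'def]; simp [hjkne.symm]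
    have hy'other : ∀ t, t ≠ j → t ≠ k → y' t = y t := by
      intro t h1 h2; rw [hy'def]; simp [h1, h2]
    have hy' : ∀ a b : Fin n, a ≤ b → y' b ≤ y' a := by
      intro a b hab
      by_cases haj : a = j
      · by_cases hbj : b = j
        · rw [haj, hbj]
        · by_cases hbk : b = k
          · rw [haj, hbk, hy'j, hy'k]; linarith
          · rw [haj, hy'j, hy'other b hbj hbk]
            have hjb : j < b := lt_of_le_of_ne (haj ▸ hab) (Ne.symm hbj)
            rcases lt_trichotomy b k with h | h | h
            · have h1 := hbetween b hjb h
              have h2 := hx j b (le_of_lt hjb)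
              linarith
            · exact absurd h hbk
            · have h1 := hy k b (le_of_lt h)
              linarith
      · by_cases hak : a = k
        · by_cases hbj : b = j
          · exact absurd (hak ▸ hbj ▸ hab) (not_le.mpr hjk)
          · by_cases hbk : b = k
            · rw [hak, hbk]
            · rw [hak, hy'k, hy'other b hbj hbk]
              have hkb : k < b := lt_of_le_of_ne (hak ▸ hab) (Ne.symm hbk)
              have h1 := hy k b (le_of_lt hkb)
              linarith
        · by_cases hbj : b = j
          · have hajlt : a < j := lt_of_le_of_ne (hbj ▸ hab) haj
            rw [hbj, hy'j, hy'other a haj hak]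
            have h1 := hy a j (le_of_lt hajlt)
            linarith
          · by_cases hbk : b = k
            · rw [hbk, hy'k, hy'other a haj hak]
              have hakb : a < k := lt_of_le_of_ne (hbk ▸ hab) hak
              rcases lt_trichotomy a j with h | h | h
              · have h1 := hy a j (le_of_lt h)
                linarith
              · exact absurd h haj
              · have h1 := hbetween a h hakb
                have h2 := hx a k (le_of_lt hakb)
                linarith
            · rw [hy'other a haj hak, hy'other b hbj hbk]
              exact hy a b hab
    have hdiff : ∀ K : ℕ, psum y' K = psum y K
        + (if (j : ℕ) < K then -δ else 0) + (if (k : ℕ) < K then δ else 0) := by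
      intro K
      unfold psum
      have hpt : ∀ t : Fin n, y' t = y t + ((if t = j then -δ else 0) + (if t = k then δ else 0)) := by
        intro t
        by_cases h1 : t = j
        · subst h1; rw [hy'j, if_pos rfl, if_neg hjkne]; ring
        · by_cases h2 : t = k
          · subst h2; rw [hy'k, if_neg h1, if_pos rfl]; ring
          · rw [hy'other t h1 h2, if_neg h1, if_neg h2]; ring
      rw [Finset.sum_congr rfl fun t _ => hpt t, Finset.sum_add_distrib, Finset.sum_add_distrib,
        Finset.sum_ite_eq' _ j (fun _ => -δ), Finset.sum_ite_eq' _ k (fun _ => δ)]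
      simp only [Finset.mem_filter, mem_univ, true_and]
      ring
    have hpsum_sub : ∀ K : ℕ, psum (fun t => y t - x t) K = psum y K - psum x K := by
      intro K; unfold psum; rw [Finset.sum_sub_distrib]
    have hseg : ∀ M : ℕ, (j : ℕ) + 1 ≤ M → M ≤ (k : ℕ) →
        psum (fun t => y t - x t) M = psum (fun t => y t - x t) ((j : ℕ) + 1) := by
      intro M hM1
      induction M, hM1 using Nat.le_induction with
      | base => intro _; rfl
      | succ M hM ihM =>
        intro hM2
        rw [psum_succ]
        have hMk : M < (k : ℕ) := by omega
        have hMn : M < n := by have := k.isLt; omega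
        rw [dif_pos hMn]
        have hjM : j < (⟨M, hMn⟩ : Fin n) := by rw [Fin.lt_def]; simp; omega
        have hMk' : (⟨M, hMn⟩ : Fin n) < k := by rw [Fin.lt_def]; simpa using hMk
        have hz : y ⟨M, hMn⟩ - x ⟨M, hMn⟩ = 0 := by
          rw [← hbetween ⟨M, hMn⟩ hjM hMk']; ring
        rw [hz, add_zero]
        exact ihM (by omega)
    have hjknat : (j : ℕ) < (k : ℕ) := hjk
    have hdom' : ∀ K, psum x K ≤ psum y' K := by
      intro K
      rw [hdiff K]
      by_cases hK1 : (k : ℕ) < K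
      · have hK2 : (j : ℕ) < K := by omega
        rw [if_pos hK1, if_pos hK2]
        have := hdom K; linarith
      · rw [if_neg hK1]
        by_cases hK2 : (j : ℕ) < K
        · rw [if_pos hK2]
          have hKk : K ≤ (k : ℕ) := not_lt.mp hK1
          have hseg' := hseg K (by omega) hKk
          have h1 : δ ≤ psum (fun t => y t - x t) ((j : ℕ) + 1) := by
            rw [hpsum_sub]; linarith [hpj]
          have h2 : δ ≤ psum (fun t => y t - x t) K := by rw [hseg']; exact h1
          rw [hpsum_sub] at h2
          linarith
        · rw [if_neg hK2]
          have := hdom K; linarith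
    have htot' : ∑ i, x i = ∑ i, y' i := by
      have h1 : ∑ i, y' i = psum y' n := (psum_of_ge y' n le_rfl).symm
      rw [h1, hdiff n, psum_of_ge y n le_rfl, if_pos j.isLt, if_pos k.isLt, htot]
      ring
    have hxne_j : x j ≠ y j := ne_of_lt hj
    have hxne_k : x k ≠ y k := (ne_of_lt hk).symm
    have hsub : ∀ i0 : Fin n, y' i0 = x i0 → x i0 ≠ y i0 →
        (univ.filter (fun i => x i ≠ y' i)).card ≤ N := by
      intro i0 hi0 hi0ne
      have hss : univ.filter (fun i => x i ≠ y' i) ⊆ (univ.filter (fun i => x i ≠ y i)).erase i0 := by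
        intro t ht
        simp only [Finset.mem_filter, mem_univ, true_and] at ht
        rw [Finset.mem_erase]
        refine ⟨fun h => ht (by rw [h, hi0]), ?_⟩
        simp only [Finset.mem_filter, mem_univ, true_and]
        by_cases h1 : t = j
        · subst h1; exact hxne_j
        · by_cases h2 : t = k
          · subst h2; exact hxne_k
          · rw [← hy'other t h1 h2]; exact ht
      have hc1 := Finset.card_le_card hss
      have hmem : i0 ∈ univ.filter (fun i => x i ≠ y i) := by
        simp only [Finset.mem_filter, mem_univ, true_and]; exact hi0ne
      have hc2 := Finset.card_erase_of_mem hmem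
      omega
    have hcard' : (univ.filter (fun i => x i ≠ y' i)).card ≤ N := by
      rcases min_cases (y j - x j) (x k - y k) with ⟨heq, _⟩ | ⟨heq, _⟩
      · have hδval : δ = y j - x j := hδdef.trans heq
        refine hsub j ?_ hxne_j
        rw [hy'j, hδval]; ring
      · have hδval : δ = x k - y k := hδdef.trans heq
        refine hsub k ?_ hxne_k
        rw [hy'k, hδval]; ring
    obtain ⟨D', hD', hD'v⟩ := ih x y' hx hy' hdom' htot' hcard'
    refine ⟨D' * Tmat j k lam, DStoch_mul hD' (Tmat_DStoch j k lam hjkne h0lam h1lam), fun i => ?_⟩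
    have hTy : ∀ t, ∑ i', Tmat j k lam t i' * y i' = y' t := by
      intro t
      rw [Tmat_mulVec j k lam hjkne y t]
      by_cases h1 : t = j
      · rw [if_pos h1, h1, hy'j, hlamdef]
        field_simp
        ring
      · by_cases h2 : t = k
        · rw [if_neg h1, if_pos h2, h2, hy'k, hlamdef]
          field_simp
          ring
        · rw [if_neg h1, if_neg h2, hy'other t h1 h2]
    calc x i = ∑ t, D' i t * y' t := hD'v i
      _ = ∑ t, D' i t * ∑ i', Tmat j k lam t i' * y i' := by
            exact Finset.sum_congr rfl fun t _ => by rw [hTy t]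
      _ = ∑ t, ∑ i', D' i t * (Tmat j k lam t i' * y i') := by
            exact Finset.sum_congr rfl fun t _ => by rw [Finset.mul_sum]
      _ = ∑ i', ∑ t, D' i t * (Tmat j k lam t i' * y i') := Finset.sum_comm
      _ = ∑ i', (∑ t, D' i t * Tmat j k lam t i') * y i' := by
            refine Finset.sum_congr rfl fun i' _ => ?_
            rw [Finset.sum_mul]
            exact Finset.sum_congr rfl fun t _ => by ring
      _ = ∑ i', (D' * Tmat j k lam) i i' * y i' := by
            refine Finset.sum_congr rfl fun i' _ => ?_
            rw [Matrix.mul_apply]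
lemma Lmat_mul_apply {n m : ℕ} (A : Matrix (Fin n) (Fin m) ℝ) (k : Fin n) (w : Fin m) :
    (Lmat n * A) k w = ∑ i ∈ univ.filter (fun i => i ≤ k), A i w := by
  rw [Matrix.mul_apply, Finset.sum_filter]
  refine Finset.sum_congr rfl fun i _ => ?_
  unfold Lmat
  simp only [Matrix.of_apply]
  split_ifs <;> simp

lemma LDP_le_LP {n ℓ : ℕ} (D : Matrix (Fin n) (Fin n) ℝ) (hD : DStoch D)
    (P : Matrix (Fin n) (Fin ℓ) ℝ) (hPs : ∀ y, ∀ x x' : Fin n, x ≤ x' → P x' y ≤ P x y)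
    (kk : Fin n) (y : Fin ℓ) :
    ∑ i ∈ univ.filter (fun i => i ≤ kk), (D * P) i y
      ≤ ∑ i ∈ univ.filter (fun i => i ≤ kk), P i y := by
  obtain ⟨hD0, hD1, hD2⟩ := hD
  set S := univ.filter (fun i : Fin n => i ≤ kk) with hS
  set c := fun x : Fin n => ∑ i ∈ S, D i x with hc
  set χ := fun x : Fin n => if x ≤ kk then (1 : ℝ) else 0 with hχ
  have hc0 : ∀ x, 0 ≤ c x := fun x => Finset.sum_nonneg fun i _ => hD0 i x
  have hc1 : ∀ x, c x ≤ 1 := by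
    intro x
    have h1 : ∑ i ∈ S, D i x ≤ ∑ i, D i x :=
      Finset.sum_le_sum_of_subset_of_nonneg (Finset.filter_subset _ _)
        (fun i _ _ => hD0 i x)
    rw [hD2 x] at h1
    exact h1
  have hcsum1 : ∑ x, c x = (S.card : ℝ) := by
    rw [hc]
    rw [Finset.sum_comm]
    rw [Finset.sum_congr rfl fun i _ => hD1 i]
    simp
  have hχsum : ∑ x, χ x = (S.card : ℝ) := by
    have e : ∑ x, χ x = ∑ x ∈ S, (1 : ℝ) := by
      rw [Finset.sum_filter]
    rw [e]
    simp
  have hL : ∑ i ∈ S, (D * P) i y = ∑ x, c x * P x y := by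
    calc ∑ i ∈ S, (D * P) i y = ∑ i ∈ S, ∑ x, D i x * P x y :=
          Finset.sum_congr rfl fun i _ => Matrix.mul_apply
      _ = ∑ x, ∑ i ∈ S, D i x * P x y := Finset.sum_comm
      _ = ∑ x, c x * P x y := Finset.sum_congr rfl fun x _ => (Finset.sum_mul _ _ _).symm
  have hR : ∑ i ∈ S, P i y = ∑ x, χ x * P x y := by
    rw [Finset.sum_filter]
    refine Finset.sum_congr rfl fun x _ => ?_
    simp only [hχ]
    split_ifs <;> ring
  have hterm : ∀ x : Fin n, (c x - χ x) * (P x y - P kk y) ≤ 0 := by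
    intro x
    by_cases h : x ≤ kk
    · have h1 : c x - χ x ≤ 0 := by simp only [hχ]; rw [if_pos h]; linarith [hc1 x]
      have h2 : 0 ≤ P x y - P kk y := by linarith [hPs y x kk h]
      exact mul_nonpos_of_nonpos_of_nonneg h1 h2
    · have hkx : kk ≤ x := le_of_not_ge h
      have h1 : 0 ≤ c x - χ x := by simp only [hχ]; rw [if_neg h]; linarith [hc0 x]
      have h2 : P x y - P kk y ≤ 0 := by linarith [hPs y kk x hkx]
      exact mul_nonpos_of_nonneg_of_nonpos h1 h2
  have e3 : ∑ x, (c x - χ x) * P x y = ∑ x, c x * P x y - ∑ x, χ x * P x y := by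
    rw [← Finset.sum_sub_distrib]
    exact Finset.sum_congr rfl fun x _ => by ring
  have key : ∑ x, (c x - χ x) * P x y ≤ 0 := by
    have e1 : ∑ x, (c x - χ x) * P x y
        = ∑ x, ((c x - χ x) * (P x y - P kk y)) + (∑ x, (c x - χ x)) * P kk y := by
      rw [Finset.sum_mul, ← Finset.sum_add_distrib]
      exact Finset.sum_congr rfl fun x _ => by ring
    have e2 : ∑ x, (c x - χ x) = 0 := by
      rw [Finset.sum_sub_distrib, hcsum1, hχsum]; ring
    rw [e1, e2, zero_mul, add_zero]
    exact Finset.sum_nonpos fun x _ => hterm x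
  rw [hL, hR]
  linarith [key, e3]
theorem stmt11 {n ℓ m : ℕ} (P : Matrix (Fin n) (Fin ℓ) ℝ) (Q : Matrix (Fin n) (Fin m) ℝ)
    (hP : JointProb P) (hQ : JointProb Q)
    (hPs : ∀ y, ∀ x x' : Fin n, x ≤ x' → P x' y ≤ P x y)
    (hQs : ∀ w, ∀ x x' : Fin n, x ≤ x' → Q x' w ≤ Q x w) :
    CondMaj P Q ↔
      ∃ T : Matrix (Fin ℓ) (Fin m) ℝ,
        (∀ y w, 0 ≤ T y w) ∧ (∀ y, ∑ w, T y w ≤ 1) ∧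
        ∀ k w, (Lmat n * Q) k w ≤ (Lmat n * P * T) k w := by
  constructor
  · rintro ⟨J, D, R, hD, hR0, hRS, hQeq⟩
    refine ⟨∑ j, R j, ?_, ?_, ?_⟩
    · intro y w
      rw [Matrix.sum_apply]
      exact Finset.sum_nonneg fun j _ => hR0 j y w
    · intro y
      exact le_of_eq (hRS.2 y)
    · intro k w
      rw [Lmat_mul_apply Q k w]
      have hQentry : ∀ i, Q i w = ∑ j, (D j * P * R j) i w := by
        intro i; rw [hQeq, Matrix.sum_apply]
      rw [Finset.sum_congr rfl fun i _ => hQentry i, Finset.sum_comm]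
      have hRHS : (Lmat n * P * (∑ j, R j)) k w
          = ∑ j, ∑ y, (∑ i ∈ univ.filter (fun i => i ≤ k), P i y) * R j y w := by
        calc (Lmat n * P * (∑ j, R j)) k w
            = ∑ y, (Lmat n * P) k y * (∑ j, R j) y w := Matrix.mul_apply
          _ = ∑ y, ∑ j, (Lmat n * P) k y * R j y w := by
                refine Finset.sum_congr rfl fun y _ => ?_
                rw [Matrix.sum_apply, Finset.mul_sum]
          _ = ∑ j, ∑ y, (Lmat n * P) k y * R j y w := Finset.sum_comm
          _ = ∑ j, ∑ y, (∑ i ∈ univ.filter (fun i => i ≤ k), P i y) * R j y w := by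
                refine Finset.sum_congr rfl fun j _ => Finset.sum_congr rfl fun y _ => ?_
                rw [Lmat_mul_apply]
      rw [hRHS]
      refine Finset.sum_le_sum fun j _ => ?_
      have e2 : ∑ i ∈ univ.filter (fun i => i ≤ k), (D j * P * R j) i w
          = ∑ y, (∑ i ∈ univ.filter (fun i => i ≤ k), (D j * P) i y) * R j y w := by
        calc ∑ i ∈ univ.filter (fun i => i ≤ k), (D j * P * R j) i w
            = ∑ i ∈ univ.filter (fun i => i ≤ k), ∑ y, (D j * P) i y * R j y w :=
              Finset.sum_congr rfl fun i _ => Matrix.mul_apply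
          _ = ∑ y, ∑ i ∈ univ.filter (fun i => i ≤ k), (D j * P) i y * R j y w :=
              Finset.sum_comm
          _ = ∑ y, (∑ i ∈ univ.filter (fun i => i ≤ k), (D j * P) i y) * R j y w :=
              Finset.sum_congr rfl fun y _ => (Finset.sum_mul _ _ _).symm
      rw [e2]
      refine Finset.sum_le_sum fun y _ => ?_
      exact mul_le_mul_of_nonneg_right (LDP_le_LP (D j) (hD j) P hPs k y) (hR0 j y w)
  · rintro ⟨T, hT0, hT1, hTL⟩
    obtain ⟨hP0, hP1⟩ := hP
    obtain ⟨hQ0, hQ1⟩ := hQ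
    have hn : 0 < n := by
      rcases Nat.eq_zero_or_pos n with h | h
      · subst h; simp at hP1
      · exact h
    have hm : 0 < m := by
      rcases Nat.eq_zero_or_pos m with h | h
      · subst h; simp at hQ1
      · exact h
    set w0 : Fin m := ⟨0, hm⟩ with hw0
    set T' := fun (y : Fin ℓ) (w : Fin m) =>
      T y w + (if w = w0 then 1 - ∑ w', T y w' else 0) with hT'
    have hT'0 : ∀ y w, 0 ≤ T' y w := by
      intro y w
      simp only [hT']
      split_ifs with h
      · have h1 := hT1 y; have h2 := hT0 y w; linarith
      · have h2 := hT0 y w; linarith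
    have hT'row : ∀ y, ∑ w, T' y w = 1 := by
      intro y
      simp only [hT']
      rw [Finset.sum_add_distrib, Finset.sum_ite_eq' univ w0 (fun _ => 1 - ∑ w', T y w')]
      simp
    have hTle : ∀ y w, T y w ≤ T' y w := by
      intro y w
      simp only [hT']
      split_ifs with h
      · have h1 := hT1 y; linarith
      · linarith
    set v := fun (w : Fin m) (x : Fin n) => ∑ y, P x y * T' y w with hv
    have hvs : ∀ w, ∀ a b : Fin n, a ≤ b → v w b ≤ v w a := by
      intro w a b hab
      simp only [hv]
      exact Finset.sum_le_sum fun y _ =>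
        mul_le_mul_of_nonneg_right (hPs y a b hab) (hT'0 y w)
    have hLP : ∀ (kk : Fin n) w, ∑ i ∈ univ.filter (fun i => i ≤ kk), Q i w
        ≤ ∑ i ∈ univ.filter (fun i => i ≤ kk), v w i := by
      intro kk w
      have h1 := hTL kk w
      rw [Lmat_mul_apply Q kk w] at h1
      have h2 : (Lmat n * P * T) kk w
          = ∑ y, (∑ i ∈ univ.filter (fun i => i ≤ kk), P i y) * T y w := by
        calc (Lmat n * P * T) kk w = ∑ y, (Lmat n * P) kk y * T y w := Matrix.mul_apply
          _ = ∑ y, (∑ i ∈ univ.filter (fun i => i ≤ kk), P i y) * T y w := by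
                refine Finset.sum_congr rfl fun y _ => ?_
                rw [Lmat_mul_apply]
      have h3 : ∑ y, (∑ i ∈ univ.filter (fun i => i ≤ kk), P i y) * T y w
          ≤ ∑ y, (∑ i ∈ univ.filter (fun i => i ≤ kk), P i y) * T' y w :=
        Finset.sum_le_sum fun y _ => mul_le_mul_of_nonneg_left (hTle y w)
          (Finset.sum_nonneg fun i _ => hP0 i y)
      have h4 : ∑ y, (∑ i ∈ univ.filter (fun i => i ≤ kk), P i y) * T' y w
          = ∑ i ∈ univ.filter (fun i => i ≤ kk), v w i := by
        calc ∑ y, (∑ i ∈ univ.filter (fun i => i ≤ kk), P i y) * T' y w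
            = ∑ y, ∑ i ∈ univ.filter (fun i => i ≤ kk), P i y * T' y w :=
              Finset.sum_congr rfl fun y _ => Finset.sum_mul _ _ _
          _ = ∑ i ∈ univ.filter (fun i => i ≤ kk), ∑ y, P i y * T' y w := Finset.sum_comm
          _ = ∑ i ∈ univ.filter (fun i => i ≤ kk), v w i := by simp only [hv]
      linarith
    set klast : Fin n := ⟨n - 1, by omega⟩ with hkl
    have hSfull : univ.filter (fun i : Fin n => i ≤ klast) = univ := by
      ext i
      simp only [Finset.mem_filter, mem_univ, true_and, iff_true, Fin.le_def, hkl]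
      have := i.isLt
      omega
    have hQtot : ∀ w, ∑ x, Q x w ≤ ∑ x, v w x := by
      intro w
      have := hLP klast w
      rwa [hSfull] at this
    have hvtotsum : ∑ w, ∑ x, v w x = 1 := by
      simp only [hv]
      rw [Finset.sum_comm]
      calc ∑ x, ∑ w, ∑ y, P x y * T' y w
          = ∑ x, ∑ y, ∑ w, P x y * T' y w :=
            Finset.sum_congr rfl fun x _ => Finset.sum_comm
        _ = ∑ x, ∑ y, P x y * ∑ w, T' y w :=
            Finset.sum_congr rfl fun x _ => Finset.sum_congr rfl fun y _ =>
              (Finset.mul_sum _ _ _).symm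
        _ = ∑ x, ∑ y, P x y :=
            Finset.sum_congr rfl fun x _ => Finset.sum_congr rfl fun y _ => by
              rw [hT'row y, mul_one]
        _ = 1 := hP1
    have hQtotsum : ∑ w, ∑ x, Q x w = 1 := by rw [Finset.sum_comm]; exact hQ1
    have htoteq : ∀ w, ∑ x, Q x w = ∑ x, v w x := by
      have hz : ∑ w, (∑ x, v w x - ∑ x, Q x w) = 0 := by
        rw [Finset.sum_sub_distrib, hvtotsum, hQtotsum]; ring
      intro w
      have := (Finset.sum_eq_zero_iff_of_nonneg
        (fun w _ => sub_nonneg.mpr (hQtot w))).mp hz w (mem_univ w)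
      linarith
    have hdomw : ∀ w (K : ℕ), psum (fun x => Q x w) K ≤ psum (v w) K := by
      intro w K
      by_cases hK : n ≤ K
      · rw [psum_of_ge _ K hK, psum_of_ge _ K hK]
        exact le_of_eq (htoteq w)
      · push_neg at hK
        rcases Nat.eq_zero_or_pos K with h0 | h0
        · subst h0; rw [psum_zero, psum_zero]
        · have hfe : ∀ (f : Fin n → ℝ), psum f K
              = ∑ i ∈ univ.filter (fun i => i ≤ (⟨K - 1, by omega⟩ : Fin n)), f i := by
            intro f
            unfold psum
            refine Finset.sum_congr ?_ fun _ _ => rfl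
            ext i
            simp only [Finset.mem_filter, mem_univ, true_and, Fin.le_def]
            omega
          rw [hfe, hfe]
          exact hLP ⟨K - 1, by omega⟩ w
    have hexD : ∀ w : Fin m, ∃ Dw, DStoch Dw ∧ ∀ x, Q x w = ∑ x', Dw x x' * v w x' :=
      fun w => hlp_aux (univ.filter (fun i => Q i w ≠ v w i)).card (fun x => Q x w) (v w)
        (fun a b hab => hQs w a b hab) (hvs w) (hdomw w) (htoteq w) le_rfl
    choose Dw hDw1 hDw2 using hexD
    refine ⟨m, Dw, fun w => Matrix.of fun y w' => if w' = w then T' y w else 0,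
      hDw1, ?_, ⟨?_, ?_⟩, ?_⟩
    · intro j y w
      dsimp only [Matrix.of_apply]
      split_ifs
      · exact hT'0 y j
      · exact le_rfl
    · intro y w
      rw [Matrix.sum_apply]
      refine Finset.sum_nonneg fun w' _ => ?_
      dsimp only [Matrix.of_apply]
      split_ifs
      · exact hT'0 y w'
      · exact le_rfl
    · intro y
      have e : ∀ w : Fin m,
          (∑ w' : Fin m, Matrix.of fun y w'' => if w'' = w' then T' y w' else 0) y w
            = T' y w := by
        intro w
        rw [Matrix.sum_apply]
        dsimp only [Matrix.of_apply]
        rw [Finset.sum_ite_eq univ w (fun w' => T' y w')]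
        simp
      rw [Finset.sum_congr rfl fun w _ => e w]
      exact hT'row y
    · ext x w
      rw [Matrix.sum_apply]
      have e : ∀ w' : Fin m,
          (Dw w' * P * Matrix.of fun y w'' => if w'' = w' then T' y w' else 0) x w
            = if w = w' then ∑ y, (Dw w' * P) x y * T' y w' else 0 := by
        intro w'
        rw [Matrix.mul_apply]
        by_cases h : w = w'
        · rw [if_pos h]
          refine Finset.sum_congr rfl fun y _ => ?_
          dsimp only [Matrix.of_apply]
          rw [if_pos h]
        · rw [if_neg h]
          refine Finset.sum_eq_zero fun y _ => ?_
          dsimp only [Matrix.of_apply]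
          rw [if_neg h]
          ring
      rw [Finset.sum_congr rfl fun w' _ => e w',
        Finset.sum_ite_eq univ w (fun w' => ∑ y, (Dw w' * P) x y * T' y w')]
      rw [if_pos (mem_univ w)]
      have e2 : ∑ y, (Dw w * P) x y * T' y w = ∑ x', Dw w x x' * v w x' := by
        calc ∑ y, (Dw w * P) x y * T' y w
            = ∑ y, (∑ x', Dw w x x' * P x' y) * T' y w :=
              Finset.sum_congr rfl fun y _ => by rw [Matrix.mul_apply]
          _ = ∑ y, ∑ x', Dw w x x' * P x' y * T' y w :=
              Finset.sum_congr rfl fun y _ => Finset.sum_mul _ _ _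
          _ = ∑ x', ∑ y, Dw w x x' * P x' y * T' y w := Finset.sum_comm
          _ = ∑ x', Dw w x x' * ∑ y, P x' y * T' y w := by
              refine Finset.sum_congr rfl fun x' _ => ?_
              rw [Finset.mul_sum]
              exact Finset.sum_congr rfl fun y _ => by ring
          _ = ∑ x', Dw w x x' * v w x' := by simp only [hv]
      rw [e2]
      exact hDw2 w x
end

section
/- Let P be an n×2 and Q an n×m joint probability matrix in standard form, with p = p₁ (the marginal of the first column of P), 0 < p < 1. Define μ_k = Σ_{x=1}^k (p_{x|1} − p_{x|2}) and ν_k^{(w)} = Σ_{x=1}^k (q_{x|w} − p_{x|2}). Then Q ≺_c P if and only if there exists a probability vector a = (a₁,...,a_m) such that for every w: (i) a_w ≤ q_w/p, and (ii) for all k = 1,...,n, a_w μ_k ≥ (q_w/p) ν_k^{(w)}. -/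
open Matrix Finset

/-- Partial column sum of the first `k` entries of column `w`. -/
noncomputable def PartSum {n m : ℕ} (Q : Matrix (Fin n) (Fin m) ℝ) (k : ℕ) (w : Fin m) : ℝ :=
  ∑ x ∈ Finset.univ.filter (fun x : Fin n => (x : ℕ) < k), Q x w

/-- Standard form: columns sorted nonincreasingly, no zero columns, no column a
nonnegative multiple of another, and columns ordered by nonincreasing column sums,
ties broken lexicographically by nonincreasing partial sums. -/
def StdForm {n m : ℕ} (Q : Matrix (Fin n) (Fin m) ℝ) : Prop :=
  (∀ w, ∀ x x' : Fin n, x ≤ x' → Q x' w ≤ Q x w) ∧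
  (∀ w, ∃ x, Q x w ≠ 0) ∧
  (∀ w w' : Fin m, w ≠ w' → ∀ c : ℝ, 0 ≤ c → ¬ (∀ x, Q x w = c * Q x w')) ∧
  (∀ w w' : Fin m, w < w' →
    ColSum Q w' < ColSum Q w ∨
    (ColSum Q w' = ColSum Q w ∧ ∃ k : ℕ,
      (∀ j < k, PartSum Q j w = PartSum Q j w') ∧ PartSum Q k w' < PartSum Q k w))
/-- `μ_k = ∑_{x ≤ k} (p_{x|1} - p_{x|2})`. -/
noncomputable def muP {n : ℕ} (P : Matrix (Fin n) (Fin 2) ℝ) (k : Fin n) : ℝ :=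
  ∑ x ∈ Finset.univ.filter (fun x => x ≤ k), (P x 0 / ColSum P 0 - P x 1 / ColSum P 1)

/-- `ν_k^{(w)} = ∑_{x ≤ k} (q_{x|w} - p_{x|2})`. -/
noncomputable def nuPQ {n m : ℕ} (P : Matrix (Fin n) (Fin 2) ℝ)
    (Q : Matrix (Fin n) (Fin m) ℝ) (w : Fin m) (k : Fin n) : ℝ :=
  ∑ x ∈ Finset.univ.filter (fun x => x ≤ k), (Q x w / ColSum Q w - P x 1 / ColSum P 1)

lemma filter_sum_eq {n : ℕ} (g : Fin n → ℝ) (k : ℕ) (hk : k ≤ n) :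
    ∑ x ∈ Finset.univ.filter (fun x : Fin n => (x : ℕ) < k), g x
      = ∑ j ∈ Finset.range k, (if h : j < n then g ⟨j, h⟩ else 0) := by
  induction k with
  | zero => simp
  | succ k ih =>
    have hk' : k ≤ n := Nat.le_of_succ_le hk
    rw [Finset.sum_range_succ, ← ih hk', dif_pos (Nat.lt_of_succ_le hk)]
    have : Finset.univ.filter (fun x : Fin n => (x:ℕ) < k+1)
        = insert (⟨k, Nat.lt_of_succ_le hk⟩ : Fin n)
            (Finset.univ.filter (fun x : Fin n => (x:ℕ) < k)) := by
      ext x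
      simp only [Finset.mem_filter, Finset.mem_univ, true_and, Finset.mem_insert,
        Nat.lt_succ_iff_lt_or_eq, Fin.ext_iff]
      tauto
    rw [this, Finset.sum_insert (by simp), add_comm]

lemma abel_le {n : ℕ} (d w : Fin n → ℝ)
    (hd : ∀ i j : Fin n, i ≤ j → d j ≤ d i)
    (hpre : ∀ k : ℕ, ∑ x ∈ Finset.univ.filter (fun x : Fin n => (x:ℕ) < k), w x ≤ 0)
    (htot : ∑ x, w x = 0) :
    ∑ i, d i * w i ≤ 0 := by
  rcases Nat.eq_zero_or_pos n with hn | hn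
  · subst hn; simp
  set d' : ℕ → ℝ := fun j => if h : j < n then d ⟨j, h⟩ else 0 with hd'
  set w' : ℕ → ℝ := fun j => if h : j < n then w ⟨j, h⟩ else 0 with hw'
  have key : ∑ i, d i * w i = ∑ i ∈ Finset.range n, d' i • w' i := by
    rw [← Fin.sum_univ_eq_sum_range (fun i => d' i • w' i) n]
    apply Finset.sum_congr rfl
    intro x _
    simp [hd', hw', x.isLt, smul_eq_mul]
  rw [key, Finset.sum_range_by_parts]
  have hGn : ∑ i ∈ Finset.range n, w' i = 0 := by
    rw [← filter_sum_eq w n le_rfl]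
    rw [← htot]
    apply Finset.sum_congr _ (fun x _ => rfl)
    ext x; simp [x.isLt]
  rw [hGn, smul_zero, zero_sub, neg_nonpos]
  apply Finset.sum_nonneg
  intro i hi
  rw [Finset.mem_range] at hi
  have hi1 : i + 1 < n := by omega
  have h1 : d' (i+1) - d' i ≤ 0 := by
    simp only [hd', dif_pos hi1, dif_pos (Nat.lt_of_succ_lt hi1), sub_nonpos]
    exact hd _ _ (by simp [Fin.le_def])
  have h2 : ∑ j ∈ Finset.range (i+1), w' j ≤ 0 := by
    rw [← filter_sum_eq w (i+1) (le_of_lt hi1)]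
    exact hpre (i+1)
  rw [smul_eq_mul]
  nlinarith [h1, h2]

lemma hlp {n : ℕ} (u v : Fin n → ℝ)
    (hu : ∀ i j : Fin n, i ≤ j → u j ≤ u i)
    (hv : ∀ i j : Fin n, i ≤ j → v j ≤ v i)
    (hpre : ∀ k : ℕ, ∑ x ∈ Finset.univ.filter (fun x : Fin n => (x:ℕ) < k), u x
              ≤ ∑ x ∈ Finset.univ.filter (fun x : Fin n => (x:ℕ) < k), v x)
    (htot : ∑ x, u x = ∑ x, v x) :
    ∃ D : Matrix (Fin n) (Fin n) ℝ, DStoch D ∧ ∀ i, u i = ∑ y, D i y * v y := by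
  classical
  set S : Set (Fin n → Fin n → ℝ) :=
    {D | (∀ i j, 0 ≤ D i j) ∧ (∀ i, ∑ j, D i j = 1) ∧ (∀ j, ∑ i, D i j = 1)} with hS
  set φ : (Fin n → Fin n → ℝ) → (Fin n → ℝ) := fun D i => ∑ y, D i y * v y with hφ
  set K : Set (Fin n → ℝ) := φ '' S with hK
  -- it suffices to show u ∈ K
  suffices hmem : u ∈ K by
    obtain ⟨D, hD, hDu⟩ := hmem
    exact ⟨D, hD, fun i => by rw [← hDu]⟩
  by_contra hne
  -- K is convex
  have hKconv : Convex ℝ K := by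
    rintro z1 ⟨D1, hD1, rfl⟩ z2 ⟨D2, hD2, rfl⟩ a b ha hb hab
    refine ⟨fun i j => a * D1 i j + b * D2 i j, ⟨?_, ?_, ?_⟩, ?_⟩
    · intro i j
      have := hD1.1 i j; have := hD2.1 i j; positivity
    · intro i
      simp only [Finset.sum_add_distrib, ← Finset.mul_sum, hD1.2.1 i, hD2.2.1 i]
      linarith
    · intro j
      simp only [Finset.sum_add_distrib, ← Finset.mul_sum, hD1.2.2 j, hD2.2.2 j]
      linarith
    · funext i
      simp only [hφ, Pi.add_apply, Pi.smul_apply, smul_eq_mul]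
      rw [Finset.mul_sum, Finset.mul_sum, ← Finset.sum_add_distrib]
      exact Finset.sum_congr rfl fun y _ => by ring
  -- K is closed (compact image)
  have hScpt : IsCompact S := by
    have hbig : IsCompact (Set.pi Set.univ
        (fun _ : Fin n => Set.pi Set.univ (fun _ : Fin n => Set.Icc (0:ℝ) 1))) :=
      isCompact_univ_pi fun _ => isCompact_univ_pi fun _ => isCompact_Icc
    refine hbig.of_isClosed_subset ?_ ?_
    · have h1 : IsClosed {D : Fin n → Fin n → ℝ | ∀ i j, 0 ≤ D i j} := by
        rw [Set.setOf_forall]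
        refine isClosed_iInter fun i => ?_
        rw [Set.setOf_forall]
        exact isClosed_iInter fun j =>
          isClosed_le continuous_const ((continuous_apply j).comp (continuous_apply i))
      have h2 : IsClosed {D : Fin n → Fin n → ℝ | ∀ i, ∑ j, D i j = 1} := by
        rw [Set.setOf_forall]
        exact isClosed_iInter fun i => isClosed_eq
          (continuous_finset_sum _ fun j _ => (continuous_apply j).comp (continuous_apply i))
          continuous_const
      have h3 : IsClosed {D : Fin n → Fin n → ℝ | ∀ j, ∑ i, D i j = 1} := by
        rw [Set.setOf_forall]
        exact isClosed_iInter fun j => isClosed_eq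
          (continuous_finset_sum _ fun i _ => (continuous_apply j).comp (continuous_apply i))
          continuous_const
      have : S = {D : Fin n → Fin n → ℝ | ∀ i j, 0 ≤ D i j} ∩
          ({D | ∀ i, ∑ j, D i j = 1} ∩ {D | ∀ j, ∑ i, D i j = 1}) := by
        ext D; simp only [hS, Set.mem_setOf_eq, Set.mem_inter_iff]
      rw [this]
      exact h1.inter (h2.inter h3)
    · rintro D ⟨hpos, hrow, _⟩
      intro i _
      intro j _
      refine ⟨hpos i j, ?_⟩
      calc D i j ≤ ∑ j', D i j' :=
            Finset.single_le_sum (fun j' _ => hpos i j') (Finset.mem_univ j)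
        _ = 1 := hrow i
  have hφcont : Continuous φ :=
    continuous_pi fun i => continuous_finset_sum _ fun y _ =>
      (by fun_prop : Continuous fun a : Fin n → Fin n → ℝ => a i y * v y)
  have hKclosed : IsClosed K := (hScpt.image hφcont).isClosed
  -- separation
  obtain ⟨f, s, hfK, hfu⟩ := geometric_hahn_banach_closed_point hKconv hKclosed hne
  set c : Fin n → ℝ := fun i => f (fun j => if i = j then 1 else 0) with hc
  have hfeval : ∀ x : Fin n → ℝ, f x = ∑ i, x i * c i := by
    intro x
    conv_lhs => rw [pi_eq_sum_univ x, map_sum]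
    exact Finset.sum_congr rfl fun i _ => by
      rw [f.map_smul, smul_eq_mul, hc]
  -- sort c decreasingly
  set σ : Equiv.Perm (Fin n) := (Fin.revPerm).trans (Tuple.sort c) with hσ
  set d : Fin n → ℝ := fun i => c (σ i) with hd
  have hdanti : ∀ i j : Fin n, i ≤ j → d j ≤ d i := by
    intro i j hij
    have := Tuple.monotone_sort c (a := Fin.rev j) (b := Fin.rev i) (Fin.rev_le_rev.mpr hij)
    simpa [hd, hσ, Function.comp] using this
  -- rearrangement : f u = ∑ c u ≤ ∑ d u
  have hrearr : ∑ i, c i * u i ≤ ∑ i, d i * u i := by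
    have hmono : Monovary u d := by
      intro i j hij
      rcases le_total j i with h | h
      · exact hu j i h
      · exact absurd (hdanti i j h) (not_le.mpr hij)
    have hle := hmono.sum_comp_perm_smul_le_sum_smul (σ := σ)
    have heq : ∑ i, c i * u i = ∑ i, u (σ i) • d i := by
      calc ∑ i, c i * u i = ∑ k, u k * c k :=
            Finset.sum_congr rfl fun i _ => mul_comm _ _
        _ = ∑ i, u (σ i) * c (σ i) := (Equiv.sum_comp σ (fun k => u k * c k)).symm
        _ = ∑ i, u (σ i) • d i := Finset.sum_congr rfl fun i _ => by
            simp [hd, smul_eq_mul]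
    rw [heq]
    calc ∑ i, u (σ i) • d i ≤ ∑ i, u i • d i := hle
      _ = ∑ i, d i * u i := Finset.sum_congr rfl fun i _ => by rw [smul_eq_mul, mul_comm]
  -- Abel : ∑ d (u - v) ≤ 0
  have habel : ∑ i, d i * u i ≤ ∑ i, d i * v i := by
    have := abel_le d (fun i => u i - v i) hdanti
      (fun k => by
        have := hpre k
        rw [Finset.sum_sub_distrib]
        linarith)
      (by rw [Finset.sum_sub_distrib]; linarith)
    have expand : ∑ i, d i * (u i - v i) = ∑ i, d i * u i - ∑ i, d i * v i := by
      rw [← Finset.sum_sub_distrib]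
      exact Finset.sum_congr rfl fun i _ => by ring
    linarith [expand ▸ this]
  -- the permuted v is in K
  have hperm : (fun i => v (σ⁻¹ i)) ∈ K := by
    refine ⟨fun i y => if y = σ⁻¹ i then 1 else 0, ⟨?_, ?_, ?_⟩, ?_⟩
    · intro i j; dsimp only; split <;> norm_num
    · intro i; simp
    · intro j
      dsimp only
      rw [Finset.sum_eq_single (σ j)]
      · simp
      · intro i _ hne'
        have : j ≠ σ⁻¹ i := fun h => hne' (by rw [h]; simp)
        simp [show j ≠ σ.symm i from this]
      · simp
    · funext i
      simp only [hφ]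
      rw [Finset.sum_eq_single (σ⁻¹ i)]
      · simp
      · intro y _ hy; simp [show y ≠ σ.symm i from hy]
      · simp
  -- conclude
  have hlast : ∑ i, d i * v i = f (fun i => v (σ⁻¹ i)) := by
    rw [hfeval]
    rw [← Equiv.sum_comp σ⁻¹ (fun i => d i * v i)]
    exact Finset.sum_congr rfl fun i _ => by simp [hd, mul_comm]
  have h1 : f u < f u := by
    calc f u = ∑ i, c i * u i := by
          rw [hfeval]; exact Finset.sum_congr rfl fun i _ => mul_comm _ _
      _ ≤ ∑ i, d i * u i := hrearr
      _ ≤ ∑ i, d i * v i := habel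
      _ = f (fun i => v (σ⁻¹ i)) := hlast
      _ < s := hfK _ hperm
      _ < f u := hfu
  exact absurd h1 (lt_irrefl _)

lemma lemA {n : ℕ} (D : Matrix (Fin n) (Fin n) ℝ) (hD : DStoch D) (v : Fin n → ℝ)
    (hv : ∀ i j : Fin n, i ≤ j → v j ≤ v i) (k : ℕ) :
    ∑ x ∈ Finset.univ.filter (fun x : Fin n => (x:ℕ) < k), (∑ y, D x y * v y)
      ≤ ∑ x ∈ Finset.univ.filter (fun x : Fin n => (x:ℕ) < k), v x := by
  classical
  set A : Finset (Fin n) := Finset.univ.filter (fun x : Fin n => (x:ℕ) < k) with hA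
  set c : Fin n → ℝ := fun y => ∑ x ∈ A, D x y with hc
  set e : Fin n → ℝ := fun y => if y ∈ A then 1 else 0 with he
  have hLHS : ∑ x ∈ A, (∑ y, D x y * v y) = ∑ y, c y * v y := by
    rw [Finset.sum_comm]
    exact Finset.sum_congr rfl fun y _ => by rw [hc, Finset.sum_mul]
  have hRHS : ∑ x ∈ A, v x = ∑ y, e y * v y := by
    rw [hA, Finset.sum_filter]
    exact Finset.sum_congr rfl fun y _ => by
      rw [he, hA]; simp only [Finset.mem_filter, Finset.mem_univ, true_and]
      split <;> simp
  have hc0 : ∀ y, 0 ≤ c y := fun y => Finset.sum_nonneg fun x _ => hD.1 x y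
  have hc1 : ∀ y, c y ≤ 1 := by
    intro y
    calc c y ≤ ∑ x, D x y :=
          Finset.sum_le_sum_of_subset_of_nonneg (Finset.filter_subset _ _)
            (fun x _ _ => hD.1 x y)
      _ = 1 := hD.2.2 y
  have hce : ∑ y, c y = ∑ y, e y := by
    have h1 : ∑ y, c y = (A.card : ℝ) := by
      rw [hc, Finset.sum_comm]
      rw [Finset.sum_congr rfl fun x (hx : x ∈ A) => hD.2.1 x]
      simp
    have h2 : ∑ y, e y = (A.card : ℝ) := by
      simp [he, Finset.sum_ite_mem]
    rw [h1, h2]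
  rw [hLHS, hRHS]
  by_cases hk : n ≤ k
  · -- A = univ, both sums equal
    have : ∀ y : Fin n, e y = 1 := by
      intro y; rw [he, hA]; simp [lt_of_lt_of_le y.isLt hk]
    have hcall : ∀ y, c y = 1 := by
      intro y
      by_contra hne
      have hlt : c y < 1 := lt_of_le_of_ne (hc1 y) hne
      have : ∑ y', c y' < ∑ y', e y' := by
        apply Finset.sum_lt_sum (fun i _ => (hc1 i).trans_eq (this i).symm)
        exact ⟨y, Finset.mem_univ y, by rw [this y]; exact hlt⟩
      exact absurd hce (ne_of_lt this)
    exact le_of_eq (Finset.sum_congr rfl fun y _ => by rw [this y, hcall y])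
  · push_neg at hk
    set t : ℝ := v ⟨k, hk⟩ with ht
    have key : ∑ y, (e y - c y) * (v y - t) ≥ 0 := by
      apply Finset.sum_nonneg
      intro y _
      by_cases hy : y ∈ A
      · have hyk : (y : ℕ) < k := by
          rw [hA] at hy; simpa using hy
        have hvy : t ≤ v y := hv y ⟨k, hk⟩ (by rw [Fin.le_def]; exact le_of_lt hyk)
        have he1 : e y = 1 := by simp only [he]; rw [if_pos hy]
        nlinarith [hc1 y]
      · have hyk : k ≤ (y : ℕ) := by
          rw [hA] at hy; simpa using hy
        have hvy : v y ≤ t := hv ⟨k, hk⟩ y (by rw [Fin.le_def]; exact hyk)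
        have he1 : e y = 0 := by simp only [he]; rw [if_neg hy]
        nlinarith [hc0 y]
    have expand : ∑ y, (e y - c y) * (v y - t)
        = (∑ y, e y * v y - ∑ y, c y * v y) - t * (∑ y, e y - ∑ y, c y) := by
      have hterm : ∀ y, (e y - c y) * (v y - t)
          = (e y * v y - c y * v y) - (t * e y - t * c y) := fun y => by ring
      rw [Finset.sum_congr rfl fun y _ => hterm y, Finset.sum_sub_distrib,
        Finset.sum_sub_distrib, Finset.sum_sub_distrib, ← Finset.mul_sum, ← Finset.mul_sum]
      ring
    rw [expand, hce] at key
    linarith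

lemma ineq_equiv {p pb qw aw A B C : ℝ} (hp : 0 < p) (hpb : 0 < pb) (hqw : 0 < qw) :
    (qw/p) * (A/qw - B/pb) ≤ aw * (C/p - B/pb) ↔ A ≤ aw*C + ((qw - p*aw)/pb)*B := by
  rw [← sub_nonneg, ← sub_nonneg (b := A)]
  have iden : aw * (C/p - B/pb) - (qw/p) * (A/qw - B/pb)
      = ((aw*C + ((qw - p*aw)/pb)*B) - A)/p := by
    field_simp
    ring
  rw [iden, le_div_iff₀ hp, zero_mul]

theorem stmt13 {n m : ℕ} (P : Matrix (Fin n) (Fin 2) ℝ) (Q : Matrix (Fin n) (Fin m) ℝ)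
    (hP : JointProb P) (hQ : JointProb Q) (hPstd : StdForm P) (hQstd : StdForm Q)
    (hp0 : 0 < ColSum P 0) (hp1 : ColSum P 0 < 1) :
    CondMaj P Q ↔
      ∃ a : Fin m → ℝ, (∀ w, 0 ≤ a w) ∧ (∑ w, a w = 1) ∧
        ∀ w, a w ≤ ColSum Q w / ColSum P 0 ∧
          ∀ k : Fin n, (ColSum Q w / ColSum P 0) * nuPQ P Q w k ≤ a w * muP P k := by
  classical
  obtain ⟨hPpos, hPsum⟩ := hP
  obtain ⟨hQpos, hQsum1⟩ := hQ
  have hpp : ColSum P 0 + ColSum P 1 = 1 := by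
    simp only [ColSum]
    rw [← Finset.sum_add_distrib, ← hPsum]
    exact Finset.sum_congr rfl fun x _ => (Fin.sum_univ_two _).symm
  have hpb : 0 < ColSum P 1 := by linarith
  have hqw : ∀ w, 0 < ColSum Q w := by
    intro w
    obtain ⟨x, hx⟩ := hQstd.2.1 w
    exact Finset.sum_pos' (fun x' _ => hQpos x' w)
      ⟨x, Finset.mem_univ x, lt_of_le_of_ne (hQpos x w) (Ne.symm hx)⟩
  have hQmarg : ∑ w, ColSum Q w = 1 := by
    simp only [ColSum]
    rw [Finset.sum_comm]
    exact hQsum1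
  have hfilt : ∀ k : Fin n, (Finset.univ.filter (fun x : Fin n => x ≤ k))
      = Finset.univ.filter (fun x : Fin n => (x:ℕ) < (k:ℕ)+1) := by
    intro k; ext x
    simp only [Finset.mem_filter, Finset.mem_univ, true_and]
    rw [Fin.le_def, Nat.lt_succ_iff]
  have hmu : ∀ k : Fin n, muP P k
      = (∑ x ∈ Finset.univ.filter (fun x : Fin n => (x:ℕ) < (k:ℕ)+1), P x 0) / ColSum P 0
        - (∑ x ∈ Finset.univ.filter (fun x : Fin n => (x:ℕ) < (k:ℕ)+1), P x 1) / ColSum P 1 := by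
    intro k
    unfold muP
    rw [hfilt k, Finset.sum_sub_distrib, Finset.sum_div, Finset.sum_div]
  have hnu : ∀ w (k : Fin n), nuPQ P Q w k
      = (∑ x ∈ Finset.univ.filter (fun x : Fin n => (x:ℕ) < (k:ℕ)+1), Q x w) / ColSum Q w
        - (∑ x ∈ Finset.univ.filter (fun x : Fin n => (x:ℕ) < (k:ℕ)+1), P x 1) / ColSum P 1 := by
    intro w k
    unfold nuPQ
    rw [hfilt k, Finset.sum_sub_distrib, Finset.sum_div, Finset.sum_div]
  have hiff : ∀ (w : Fin m) (aw : ℝ) (k : Fin n),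
      ((ColSum Q w / ColSum P 0) * nuPQ P Q w k ≤ aw * muP P k) ↔
      ((∑ x ∈ Finset.univ.filter (fun x : Fin n => (x:ℕ) < (k:ℕ)+1), Q x w)
        ≤ aw * (∑ x ∈ Finset.univ.filter (fun x : Fin n => (x:ℕ) < (k:ℕ)+1), P x 0)
          + ((ColSum Q w - ColSum P 0 * aw)/ColSum P 1)
            * (∑ x ∈ Finset.univ.filter (fun x : Fin n => (x:ℕ) < (k:ℕ)+1), P x 1)) := by
    intro w aw k
    rw [hnu w k, hmu k]
    exact ineq_equiv hp0 hpb (hqw w)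
  constructor
  · -- forward
    rintro ⟨J, D, R, hDj, hRpos, ⟨hRSpos, hRSrow⟩, hQeq⟩
    have hQentry : ∀ x w, Q x w
        = ∑ j, ∑ z, D j x z * (P z 0 * R j 0 w + P z 1 * R j 1 w) := by
      intro x w
      conv_lhs => rw [hQeq]
      rw [Matrix.sum_apply]
      refine Finset.sum_congr rfl fun j _ => ?_
      rw [Matrix.mul_assoc, Matrix.mul_apply]
      refine Finset.sum_congr rfl fun z _ => ?_
      rw [Matrix.mul_apply, Fin.sum_univ_two]
    have hvanti : ∀ (j : Fin J) (w : Fin m), ∀ z z' : Fin n, z ≤ z' →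
        P z' 0 * R j 0 w + P z' 1 * R j 1 w ≤ P z 0 * R j 0 w + P z 1 * R j 1 w := by
      intro j w z z' hz
      have h0 := hPstd.1 0 z z' hz
      have h1 := hPstd.1 1 z z' hz
      have := hRpos j 0 w
      have := hRpos j 1 w
      nlinarith
    have hmarg : ∀ w, ColSum Q w
        = ColSum P 0 * (∑ j, R j 0 w) + ColSum P 1 * (∑ j, R j 1 w) := by
      intro w
      have step1 : ColSum Q w
          = ∑ j, ∑ z, (∑ x, D j x z) * (P z 0 * R j 0 w + P z 1 * R j 1 w) := by
        simp only [ColSum]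
        calc ∑ x, Q x w
            = ∑ x, ∑ j, ∑ z, D j x z * (P z 0 * R j 0 w + P z 1 * R j 1 w) :=
              Finset.sum_congr rfl fun x _ => hQentry x w
          _ = ∑ j, ∑ x, ∑ z, D j x z * (P z 0 * R j 0 w + P z 1 * R j 1 w) :=
              Finset.sum_comm
          _ = ∑ j, ∑ z, ∑ x, D j x z * (P z 0 * R j 0 w + P z 1 * R j 1 w) :=
              Finset.sum_congr rfl fun j _ => Finset.sum_comm
          _ = ∑ j, ∑ z, (∑ x, D j x z) * (P z 0 * R j 0 w + P z 1 * R j 1 w) :=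
              Finset.sum_congr rfl fun j _ => Finset.sum_congr rfl fun z _ =>
                (Finset.sum_mul _ _ _).symm
      rw [step1]
      have step2 : ∀ j : Fin J, ∑ z, (∑ x, D j x z) * (P z 0 * R j 0 w + P z 1 * R j 1 w)
          = ColSum P 0 * R j 0 w + ColSum P 1 * R j 1 w := by
        intro j
        have : ∀ z : Fin n, (∑ x, D j x z) * (P z 0 * R j 0 w + P z 1 * R j 1 w)
            = P z 0 * R j 0 w + P z 1 * R j 1 w := fun z => by
          rw [(hDj j).2.2 z, one_mul]
        rw [Finset.sum_congr rfl fun z _ => this z, Finset.sum_add_distrib]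
        simp only [ColSum]
        rw [Finset.sum_mul, Finset.sum_mul]
      rw [Finset.sum_congr rfl fun j _ => step2 j, Finset.sum_add_distrib,
        ← Finset.mul_sum, ← Finset.mul_sum]
    have hpref : ∀ (w : Fin m) (k : ℕ),
        ∑ x ∈ Finset.univ.filter (fun x : Fin n => (x:ℕ) < k), Q x w
          ≤ (∑ x ∈ Finset.univ.filter (fun x : Fin n => (x:ℕ) < k), P x 0) * (∑ j, R j 0 w)
            + (∑ x ∈ Finset.univ.filter (fun x : Fin n => (x:ℕ) < k), P x 1) * (∑ j, R j 1 w) := by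
      intro w k
      set F := Finset.univ.filter (fun x : Fin n => (x:ℕ) < k) with hF
      calc ∑ x ∈ F, Q x w
          = ∑ x ∈ F, ∑ j, ∑ z, D j x z * (P z 0 * R j 0 w + P z 1 * R j 1 w) :=
            Finset.sum_congr rfl fun x _ => hQentry x w
        _ = ∑ j, ∑ x ∈ F, ∑ z, D j x z * (P z 0 * R j 0 w + P z 1 * R j 1 w) :=
            Finset.sum_comm
        _ ≤ ∑ j, ∑ x ∈ F, (P x 0 * R j 0 w + P x 1 * R j 1 w) := by
            refine Finset.sum_le_sum fun j _ => ?_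
            exact lemA (D j) (hDj j) _ (hvanti j w) k
        _ = ∑ j, ((∑ x ∈ F, P x 0) * R j 0 w + (∑ x ∈ F, P x 1) * R j 1 w) := by
            refine Finset.sum_congr rfl fun j _ => ?_
            rw [Finset.sum_add_distrib, Finset.sum_mul, Finset.sum_mul]
        _ = (∑ x ∈ F, P x 0) * (∑ j, R j 0 w) + (∑ x ∈ F, P x 1) * (∑ j, R j 1 w) := by
            rw [Finset.sum_add_distrib, ← Finset.mul_sum, ← Finset.mul_sum]
    refine ⟨fun w => ∑ j, R j 0 w, fun w => Finset.sum_nonneg fun j _ => hRpos j 0 w, ?_, ?_⟩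
    · have := hRSrow 0
      rw [← this]
      exact Finset.sum_congr rfl fun w _ => by rw [Matrix.sum_apply]
    · intro w
      have htv0 : 0 ≤ ∑ j, R j 1 w := Finset.sum_nonneg fun j _ => hRpos j 1 w
      have hm := hmarg w
      constructor
      · rw [le_div_iff₀ hp0]
        nlinarith [mul_nonneg hpb.le htv0]
      · intro k
        rw [hiff w _ k]
        have h1 := hpref w ((k:ℕ)+1)
        have h2 : (ColSum Q w - ColSum P 0 * (∑ j, R j 0 w)) / ColSum P 1
            = ∑ j, R j 1 w := by
          rw [hm]
          field_simp
          ring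
        rw [h2]
        linarith
  · -- backward
    rintro ⟨a, ha0, hasum, haw⟩
    set tv : Fin m → ℝ := fun w => (ColSum Q w - ColSum P 0 * a w) / ColSum P 1 with htvdef
    have htv0 : ∀ w, 0 ≤ tv w := by
      intro w
      have h1 : a w * ColSum P 0 ≤ ColSum Q w := (le_div_iff₀ hp0).mp (haw w).1
      apply div_nonneg _ hpb.le
      nlinarith
    have htvpb : ∀ w, tv w * ColSum P 1 = ColSum Q w - ColSum P 0 * a w := by
      intro w
      rw [htvdef]
      field_simp
    have hvanti : ∀ w, ∀ z z' : Fin n, z ≤ z' →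
        a w * P z' 0 + tv w * P z' 1 ≤ a w * P z 0 + tv w * P z 1 := by
      intro w z z' hz
      have h0 := hPstd.1 0 z z' hz
      have h1 := hPstd.1 1 z z' hz
      have := ha0 w
      have := htv0 w
      nlinarith
    have htotal : ∀ w, ∑ x, Q x w = ∑ x, (a w * P x 0 + tv w * P x 1) := by
      intro w
      rw [Finset.sum_add_distrib, ← Finset.mul_sum, ← Finset.mul_sum]
      have e0 : ∑ x, P x 0 = ColSum P 0 := rfl
      have e1 : ∑ x, P x 1 = ColSum P 1 := rfl
      have eq : ∑ x, Q x w = ColSum Q w := rfl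
      rw [e0, e1, eq]
      have := htvpb w
      nlinarith [htvpb w]
    have hprefix : ∀ w (k : ℕ),
        ∑ x ∈ Finset.univ.filter (fun x : Fin n => (x:ℕ) < k), Q x w
          ≤ ∑ x ∈ Finset.univ.filter (fun x : Fin n => (x:ℕ) < k), (a w * P x 0 + tv w * P x 1) := by
      intro w k
      rcases Nat.eq_zero_or_pos k with hk0 | hkpos
      · subst hk0; simp
      rcases le_or_gt k n with hkn | hkn
      · obtain ⟨k', rfl⟩ : ∃ k', k = k' + 1 := ⟨k - 1, by omega⟩
        have hk'n : k' < n := by omega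
        have := (haw w).2 ⟨k', hk'n⟩
        rw [hiff w (a w) ⟨k', hk'n⟩] at this
        rw [Finset.sum_add_distrib, ← Finset.mul_sum, ← Finset.mul_sum]
        have h2 := htvpb w
        calc ∑ x ∈ Finset.univ.filter (fun x : Fin n => (x:ℕ) < k'+1), Q x w
            ≤ a w * (∑ x ∈ Finset.univ.filter (fun x : Fin n => (x:ℕ) < k'+1), P x 0)
              + ((ColSum Q w - ColSum P 0 * a w)/ColSum P 1)
                * (∑ x ∈ Finset.univ.filter (fun x : Fin n => (x:ℕ) < k'+1), P x 1) := this
          _ = _ := by rw [htvdef]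
      · have huniv : Finset.univ.filter (fun x : Fin n => (x:ℕ) < k) = Finset.univ := by
          ext x; simp [lt_of_lt_of_le x.isLt (le_of_lt hkn)]
        rw [huniv]
        exact le_of_eq (htotal w)
    choose Dw hDw1 hDw2 using fun w =>
      hlp (fun x => Q x w) (fun x => a w * P x 0 + tv w * P x 1)
        (fun i j hij => hQstd.1 w i j hij) (hvanti w) (hprefix w) (htotal w)
    refine ⟨m, Dw,
      (fun j => Matrix.of fun (y : Fin 2) (w' : Fin m) =>
        if w' = j then (if y = 0 then a j else tv j) else 0), hDw1, ?_, ⟨?_, ?_⟩, ?_⟩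
    · intro j y w'
      simp only [Matrix.of_apply]
      split_ifs
      · exact ha0 j
      · exact htv0 j
      · exact le_refl 0
    · intro y w'
      rw [Matrix.sum_apply]
      apply Finset.sum_nonneg
      intro j _
      simp only [Matrix.of_apply]
      split_ifs
      · exact ha0 j
      · exact htv0 j
      · exact le_refl 0
    · intro y
      have hentry : ∀ w' : Fin m,
          (∑ j : Fin m, Matrix.of (fun (y : Fin 2) (w'' : Fin m) =>
            if w'' = j then (if y = 0 then a j else tv j) else 0)) y w'
          = (if y = 0 then a w' else tv w') := by
        intro w'
        rw [Matrix.sum_apply]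
        rw [Finset.sum_eq_single w']
        · simp
        · intro j _ hj
          simp only [Matrix.of_apply]
          exact if_neg (Ne.symm hj)
        · simp
      rw [Finset.sum_congr rfl fun w' _ => hentry w']
      by_cases hy : y = 0
      · simp only [hy, if_pos rfl]
        simpa using hasum
      · simp only [if_neg hy]
        have : ∑ w, tv w = (∑ w, (ColSum Q w - ColSum P 0 * a w)) / ColSum P 1 := by
          rw [Finset.sum_div]
        rw [this, Finset.sum_sub_distrib, hQmarg, ← Finset.mul_sum, hasum, mul_one]
        rw [div_eq_one_iff_eq (ne_of_gt hpb)]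
        linarith
    · ext x w
      rw [Matrix.sum_apply]
      have hterm : ∀ j : Fin m,
          (Dw j * P * Matrix.of (fun (y : Fin 2) (w'' : Fin m) =>
            if w'' = j then (if y = 0 then a j else tv j) else 0)) x w
          = (if w = j then ((Dw j * P) x 0 * a j + (Dw j * P) x 1 * tv j) else 0) := by
        intro j
        rw [Matrix.mul_apply, Fin.sum_univ_two]
        by_cases h : w = j
        · simp [Matrix.of_apply, h]
        · simp [Matrix.of_apply, h]
      rw [Finset.sum_congr rfl fun j _ => hterm j, Finset.sum_ite_eq]
      simp only [Finset.mem_univ, if_pos]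
      rw [Matrix.mul_apply, Matrix.mul_apply, Finset.sum_mul, Finset.sum_mul,
        ← Finset.sum_add_distrib]
      rw [hDw2 w x]
      exact Finset.sum_congr rfl fun z _ => by ring
end

section
/- Let P be an n×2 and Q an n×m joint probability matrix in standard form, with p = p₁ ∈ (0,1). With μ_k, ν_k^{(w)}, index sets I⁺ = {k : μ_k > 0}, I⁰ = {k : μ_k = 0}, I⁻ = {k : μ_k < 0}, and α_w = (q_w/p)·max{0, max_{k∈I⁺} ν_k^{(w)}/μ_k}, β_w = (q_w/p)·min{1, min_{k∈I⁻} ν_k^{(w)}/μ_k}, one has: Q ≺_c P if and only if (a) ν_k^{(w)} ≤ 0 for all w and all k ∈ I⁰; (b) α_w ≤ β_w for all w; (c) Σ_w α_w ≤ 1; and (d) Σ_w β_w ≥ 1. -/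
open Matrix Finset

/-- `α_w = (q_w/p)·max{0, max_{k∈I⁺} ν_k^{(w)}/μ_k}` (max over the empty set is 0). -/
noncomputable def alphaW {n m : ℕ} (P : Matrix (Fin n) (Fin 2) ℝ)
    (Q : Matrix (Fin n) (Fin m) ℝ) (w : Fin m) : ℝ :=
  (ColSum Q w / ColSum P 0) *
    ((insert (0 : ℝ) ((Finset.univ.filter fun k => 0 < muP P k).image
      fun k => nuPQ P Q w k / muP P k)).max' (Finset.insert_nonempty _ _))

/-- `β_w = (q_w/p)·min{1, min_{k∈I⁻} ν_k^{(w)}/μ_k}` (min over the empty set is 1). -/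
noncomputable def betaW {n m : ℕ} (P : Matrix (Fin n) (Fin 2) ℝ)
    (Q : Matrix (Fin n) (Fin m) ℝ) (w : Fin m) : ℝ :=
  (ColSum Q w / ColSum P 0) *
    ((insert (1 : ℝ) ((Finset.univ.filter fun k => muP P k < 0).image
      fun k => nuPQ P Q w k / muP P k)).min' (Finset.insert_nonempty _ _))


namespace S14
variable {n m : ℕ}

variable {n : ℕ}

noncomputable def Pre (v : Fin n → ℝ) (K : ℕ) : ℝ :=
  ∑ x ∈ Finset.univ.filter (fun x : Fin n => (x : ℕ) < K), v x

lemma card_filter_lt (K : ℕ) (hK : K ≤ n) :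
    (Finset.univ.filter (fun x : Fin n => (x : ℕ) < K)).card = K := by
  have h : (Finset.univ.filter (fun x : Fin n => (x : ℕ) < K)) =
      (Finset.univ : Finset (Fin K)).map ⟨Fin.castLE hK, Fin.castLE_injective hK⟩ := by
    ext x
    simp only [mem_filter, mem_univ, true_and, mem_map, Function.Embedding.coeFn_mk]
    constructor
    · intro hx; exact ⟨⟨x, hx⟩, by simp [Fin.castLE, Fin.ext_iff]⟩
    · rintro ⟨y, -, rfl⟩; exact y.2
  rw [h]; simp

lemma Pre_eq_sum_ite (v : Fin n → ℝ) (K : ℕ) :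
    Pre v K = ∑ i : Fin n, if (i:ℕ) < K then v i else 0 := by
  unfold Pre; rw [Finset.sum_filter]

lemma Pre_total (v : Fin n → ℝ) : Pre v n = ∑ x, v x := by
  unfold Pre
  rw [Finset.filter_true_of_mem (fun x _ => x.2)]

/-- Lemma A: substochastic weight bound for nonincreasing vectors. -/
lemma lemA (v w : Fin n → ℝ) (hv : ∀ i j : Fin n, i ≤ j → v j ≤ v i)
    (hw0 : ∀ i, 0 ≤ w i) (hw1 : ∀ i, w i ≤ 1) (K : ℕ) (hK : K ≤ n)
    (hsum : ∑ i, w i = (K : ℝ)) :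
    ∑ i, w i * v i ≤ Pre v K := by
  rcases Nat.eq_zero_or_pos n with hn | hn
  · subst hn; simp [Pre]
  have hKn : min K (n-1) < n := lt_of_le_of_lt (min_le_right _ _) (by omega)
  set t : ℝ := v ⟨min K (n-1), hKn⟩ with ht
  have key : ∑ i, (w i - if (i:ℕ) < K then 1 else 0) * v i ≤
      ∑ i, (w i - if (i:ℕ) < K then 1 else 0) * t := by
    apply Finset.sum_le_sum
    intro i _
    by_cases hi : (i:ℕ) < K
    · simp only [hi, if_pos]
      have hvi : t ≤ v i := hv _ _ (by simp only [Fin.le_def]; omega)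
      have h1 : w i - 1 ≤ 0 := by linarith [hw1 i]
      nlinarith
    · simp only [hi, if_neg, not_false_iff]
      have hvi : v i ≤ t := hv _ _ (by simp only [Fin.le_def]; omega)
      have h1 : (0:ℝ) ≤ w i := hw0 i
      simp only [sub_zero]
      nlinarith
  have h1 : ∑ i, (w i - if (i:ℕ) < K then 1 else 0) * v i
      = ∑ i, w i * v i - Pre v K := by
    rw [Pre_eq_sum_ite, ← Finset.sum_sub_distrib]
    apply Finset.sum_congr rfl
    intro i _
    by_cases hi : (i:ℕ) < K <;> simp [hi, sub_mul]
  have h2 : ∑ i, (w i - if (i:ℕ) < K then 1 else 0) * t = 0 := by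
    rw [← Finset.sum_mul, Finset.sum_sub_distrib, hsum]
    have : ∑ i : Fin n, (if (i:ℕ) < K then (1:ℝ) else 0) = (K:ℝ) := by
      rw [← Finset.sum_filter, Finset.sum_const, card_filter_lt K hK]
      simp
    rw [this]; ring
  rw [h1, h2] at key
  linarith

/-- Lemma B: prefix sums of `D • v` for doubly stochastic `D` and nonincreasing `v`. -/
lemma lemB (D : Matrix (Fin n) (Fin n) ℝ)
    (hD0 : ∀ i j, 0 ≤ D i j) (hDr : ∀ i, ∑ j, D i j = 1) (hDc : ∀ j, ∑ i, D i j = 1)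
    (v : Fin n → ℝ) (hv : ∀ i j : Fin n, i ≤ j → v j ≤ v i) (K : ℕ) (hK : K ≤ n) :
    Pre (fun x => ∑ i, D x i * v i) K ≤ Pre v K := by
  have hswap : Pre (fun x => ∑ i, D x i * v i) K
      = ∑ i, (∑ x ∈ Finset.univ.filter (fun x : Fin n => (x : ℕ) < K), D x i) * v i := by
    unfold Pre
    rw [Finset.sum_comm]
    simp_rw [Finset.sum_mul]
  rw [hswap]
  refine lemA v _ hv ?_ ?_ K hK ?_
  · intro i
    exact Finset.sum_nonneg fun x _ => hD0 x i
  · intro i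
    calc ∑ x ∈ Finset.univ.filter (fun x : Fin n => (x : ℕ) < K), D x i
        ≤ ∑ x, D x i := Finset.sum_le_sum_of_subset_of_nonneg (Finset.filter_subset _ _)
          (fun x _ _ => hD0 x i)
      _ = 1 := hDc i
  · rw [Finset.sum_comm]
    calc ∑ x ∈ Finset.univ.filter (fun x : Fin n => (x : ℕ) < K), ∑ i, D x i
        = ∑ x ∈ Finset.univ.filter (fun x : Fin n => (x : ℕ) < K), 1 :=
          Finset.sum_congr rfl fun x _ => hDr x
      _ = (K:ℝ) := by rw [Finset.sum_const, card_filter_lt K hK]; simp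


lemma Pre_split (v : Fin n → ℝ) {K1 K2 : ℕ} (h : K1 ≤ K2) :
    Pre v K2 = Pre v K1 +
      ∑ x ∈ Finset.univ.filter (fun x : Fin n => K1 ≤ (x:ℕ) ∧ (x:ℕ) < K2), v x := by
  unfold Pre
  rw [← Finset.sum_union]
  · apply Finset.sum_congr _ (fun x _ => rfl)
    ext x
    simp only [mem_union, mem_filter, mem_univ, true_and]
    omega
  · rw [Finset.disjoint_left]
    intro x hx hx'
    simp only [mem_filter, mem_univ, true_and] at hx hx'
    omega

lemma Pre_succ (v : Fin n → ℝ) (i : Fin n) :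
    Pre v ((i:ℕ)+1) = Pre v (i:ℕ) + v i := by
  rw [Pre_split v (Nat.le_succ _)]
  congr 1
  have h : Finset.univ.filter (fun x : Fin n => (i:ℕ) ≤ (x:ℕ) ∧ (x:ℕ) < (i:ℕ)+1) = {i} := by
    ext x
    simp only [mem_filter, mem_univ, true_and, mem_singleton, Fin.ext_iff]
    omega
  rw [h, Finset.sum_singleton]

lemma DStoch_one : DStoch (1 : Matrix (Fin n) (Fin n) ℝ) := by
  refine ⟨fun i j => ?_, fun i => ?_, fun j => ?_⟩ <;>
    simp [Matrix.one_apply] <;> positivity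

/-- HLP: if both vectors are nonincreasing, prefix sums of `q` are dominated by
those of `c`, and totals agree, then `q = D c` for a doubly stochastic `D`. -/
lemma hlp (q : Fin n → ℝ) (hq : ∀ i j : Fin n, i ≤ j → q j ≤ q i) :
    ∀ d : ℕ, ∀ c : Fin n → ℝ,
    (∀ i j : Fin n, i ≤ j → c j ≤ c i) →
    (∀ K : ℕ, Pre q K ≤ Pre c K) →
    (∑ i, q i = ∑ i, c i) →
    (Finset.univ.filter fun x => q x ≠ c x).card ≤ d →
    ∃ D : Matrix (Fin n) (Fin n) ℝ, DStoch D ∧ ∀ x, q x = ∑ i, D x i * c i := by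
  intro d
  induction d with
  | zero =>
    intro c _ _ _ hcard
    have hqc : q = c := by
      funext x
      by_contra hx
      have : x ∈ Finset.univ.filter fun x => q x ≠ c x := by simp [hx]
      have := Finset.card_pos.mpr ⟨x, this⟩
      omega
    exact ⟨1, DStoch_one, fun x => by simp [hqc, Matrix.one_apply, ite_mul]⟩
  | succ d ih =>
    intro c hc hpre htot hcard
    by_cases hqc : q = c
    · exact ⟨1, DStoch_one, fun x => by simp [hqc, Matrix.one_apply, ite_mul]⟩
    -- the set where q < c is nonempty
    have hS : (Finset.univ.filter fun x => q x < c x).Nonempty := by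
      by_contra hS
      rw [Finset.not_nonempty_iff_eq_empty, Finset.filter_eq_empty_iff] at hS
      apply hqc
      funext x
      have h0 : ∑ i, (q i - c i) = 0 := by rw [Finset.sum_sub_distrib, htot]; ring
      have hnn : ∀ i ∈ Finset.univ, (0:ℝ) ≤ q i - c i := by
        intro i _
        have := hS (Finset.mem_univ i)
        push_neg at this
        linarith
      have := (Finset.sum_eq_zero_iff_of_nonneg hnn).mp h0 x (Finset.mem_univ x)
      linarith
    set i := (Finset.univ.filter fun x => q x < c x).max' hS with hi
    have hqi : q i < c i := by
      have := (Finset.univ.filter fun x => q x < c x).max'_mem hS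
      rw [← hi] at this
      exact (Finset.mem_filter.mp this).2
    have hmaxi : ∀ k : Fin n, i < k → c k ≤ q k := by
      intro k hk
      by_contra hck
      push_neg at hck
      have hkm : k ∈ Finset.univ.filter fun x => q x < c x := by simp [hck]
      have := Finset.le_max' _ k hkm
      rw [← hi] at this
      exact absurd (lt_of_lt_of_le hk this) (lt_irrefl _)
    -- find j > i with c j < q j
    have hT : (Finset.univ.filter fun x : Fin n => i < x ∧ c x < q x).Nonempty := by
      by_contra hT
      rw [Finset.not_nonempty_iff_eq_empty, Finset.filter_eq_empty_iff] at hT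
      -- sum of (q-c) over x > i is positive, contradiction
      have hsplit : ∑ x, (q x - c x) = Pre (fun x => q x - c x) ((i:ℕ)+1) +
          ∑ x ∈ Finset.univ.filter (fun x : Fin n => (i:ℕ)+1 ≤ (x:ℕ) ∧ (x:ℕ) < n),
            (q x - c x) := by
        have := Pre_split (fun x => q x - c x) (K1 := (i:ℕ)+1) (K2 := n) i.2
        rw [← this]
        unfold Pre
        rw [Finset.filter_true_of_mem (fun x _ => x.2)]
      have hPreqc : ∀ K : ℕ, Pre (fun x => q x - c x) K = Pre q K - Pre c K := by
        intro K; unfold Pre; rw [Finset.sum_sub_distrib]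
      have h1 : Pre (fun x => q x - c x) ((i:ℕ)+1) < 0 := by
        rw [hPreqc, Pre_succ, Pre_succ]
        have := hpre (i:ℕ)
        linarith
      have h2 : ∑ x ∈ Finset.univ.filter (fun x : Fin n => (i:ℕ)+1 ≤ (x:ℕ) ∧ (x:ℕ) < n),
          (q x - c x) ≤ 0 := by
        apply Finset.sum_nonpos
        intro x hx
        simp only [mem_filter, mem_univ, true_and] at hx
        have hix : i < x := by rw [Fin.lt_def]; omega
        have := hT (Finset.mem_univ x)
        push_neg at this
        have := this hix
        linarith
      rw [Finset.sum_sub_distrib, htot] at hsplit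
      linarith
    set j := (Finset.univ.filter fun x : Fin n => i < x ∧ c x < q x).min' hT with hj
    have hjmem := (Finset.univ.filter fun x : Fin n => i < x ∧ c x < q x).min'_mem hT
    rw [← hj] at hjmem
    simp only [mem_filter, mem_univ, true_and] at hjmem
    obtain ⟨hij, hcj⟩ := hjmem
    have hminj : ∀ k : Fin n, i < k → k < j → q k = c k := by
      intro k hik hkj
      by_contra hk
      rcases lt_or_gt_of_ne hk with h | h
      · exact absurd hik (not_lt.mpr (Finset.le_max' _ k (by simp [h])))
      · have : j ≤ k := by
          apply Finset.min'_le
          simp only [mem_filter, mem_univ, true_and]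
          exact ⟨hik, h⟩
        exact absurd (lt_of_le_of_lt this hkj) (lt_irrefl _)
    -- basic inequalities
    have hqij : q j ≤ q i := hq i j (le_of_lt hij)
    have hcij : c j < c i := by linarith
    set δ : ℝ := min (c i - q i) (q j - c j) with hδdef
    have hδ : 0 < δ := lt_min (by linarith) (by linarith)
    have hδ1 : δ ≤ c i - q i := min_le_left _ _
    have hδ2 : δ ≤ q j - c j := min_le_right _ _
    have hF2 : q i ≤ c i - δ := by linarith
    have hF1 : c j + δ ≤ q j := by linarith
    set c' : Fin n → ℝ := fun x => if x = i then c i - δ else if x = j then c j + δ else c x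
      with hc'def
    have hij' : i ≠ j := ne_of_lt hij
    have hc'i : c' i = c i - δ := by simp [hc'def]
    have hc'j : c' j = c j + δ := by simp [hc'def, hij'.symm]
    have hc'other : ∀ x, x ≠ i → x ≠ j → c' x = c x := by
      intro x h1 h2; simp [hc'def, h1, h2]
    -- c' is nonincreasing
    have hc' : ∀ a b : Fin n, a ≤ b → c' b ≤ c' a := by
      intro a b hab
      by_cases hai : a = i
      · rw [hai, hc'i]
        by_cases hbi : b = i
        · rw [hbi, hc'i]
        · by_cases hbj : b = j
          · rw [hbj, hc'j]; linarith
          · rw [hc'other b hbi hbj]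
            have hab' : i < b := lt_of_le_of_ne (hai ▸ hab) (Ne.symm hbi)
            by_cases hbj' : b < j
            · have e1 := hminj b hab' hbj'
              have e2 := hq i b (le_of_lt hab')
              linarith
            · have hjb : j ≤ b := not_lt.mp hbj'
              have hjb' : j < b := lt_of_le_of_ne hjb (Ne.symm hbj)
              have := hc j b (le_of_lt hjb')
              linarith
      · by_cases haj : a = j
        · rw [haj, hc'j]
          by_cases hbi : b = i
          · exact absurd (lt_of_lt_of_le hij (hbi ▸ haj ▸ hab)) (lt_irrefl _)
          · by_cases hbj : b = j
            · rw [hbj, hc'j]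
            · rw [hc'other b hbi hbj]
              have := hc j b (haj ▸ hab)
              linarith
        · rw [hc'other a hai haj]
          by_cases hbi : b = i
          · rw [hbi, hc'i]
            have := hc a b hab
            rw [hbi] at this
            linarith
          · by_cases hbj : b = j
            · rw [hbj, hc'j]
              have hab' : a < j := lt_of_le_of_ne (hbj ▸ hab) haj
              by_cases hia : i < a
              · have e1 := hminj a hia hab'
                have e2 := hq a j (le_of_lt hab')
                linarith
              · have h1 : a ≤ i := not_lt.mp hia
                have := hc a i h1
                linarith
            · rw [hc'other b hbi hbj]
              exact hc a b hab
    -- prefix sums of c'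
    have hc'pre : ∀ K : ℕ, Pre c' K = Pre c K +
        ((if (i:ℕ) < K then -δ else 0) + (if (j:ℕ) < K then δ else 0)) := by
      intro K
      unfold Pre
      have hterm : ∀ x ∈ Finset.univ.filter (fun x : Fin n => (x:ℕ) < K),
          c' x = c x + ((if x = i then -δ else 0) + (if x = j then δ else 0)) := by
        intro x _
        by_cases h1 : x = i
        · rw [h1, hc'i]; simp [hij']; ring
        · by_cases h2 : x = j
          · rw [h2, hc'j]; simp [hij'.symm]
          · rw [hc'other x h1 h2]; simp [h1, h2]
      rw [Finset.sum_congr rfl hterm, Finset.sum_add_distrib, Finset.sum_add_distrib,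
        Finset.sum_ite_eq' _ i (fun _ => -δ), Finset.sum_ite_eq' _ j (fun _ => δ)]
      simp only [mem_filter, mem_univ, true_and]
    -- prefix domination for c'
    have hpre' : ∀ K : ℕ, Pre q K ≤ Pre c' K := by
      intro K
      rw [hc'pre K]
      by_cases h1 : (i:ℕ) < K
      · by_cases h2 : (j:ℕ) < K
        · simp only [h1, h2, if_pos]
          have := hpre K
          linarith
        · -- middle regime: need Pre q K ≤ Pre c K - δ
          simp only [h1, if_pos, h2, if_neg, not_false_iff]
          have hKj : K ≤ (j:ℕ) := not_lt.mp h2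
          have hiK : (i:ℕ)+1 ≤ K := h1
          have hsq := Pre_split q hiK
          have hsc := Pre_split c hiK
          have hmidzero : ∑ x ∈ Finset.univ.filter
              (fun x : Fin n => (i:ℕ)+1 ≤ (x:ℕ) ∧ (x:ℕ) < K), q x =
              ∑ x ∈ Finset.univ.filter
              (fun x : Fin n => (i:ℕ)+1 ≤ (x:ℕ) ∧ (x:ℕ) < K), c x := by
            apply Finset.sum_congr rfl
            intro x hx
            simp only [mem_filter, mem_univ, true_and] at hx
            exact hminj x (by rw [Fin.lt_def]; omega) (by rw [Fin.lt_def]; omega)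
          rw [Pre_succ] at hsq hsc
          have := hpre (i:ℕ)
          linarith
      · have h2 : ¬ (j:ℕ) < K := by
          intro h2
          exact h1 (lt_trans (by exact_mod_cast hij) h2)
        simp only [h1, h2, if_neg, not_false_iff]
        have := hpre K
        linarith
    -- total of c'
    have htot' : ∑ x, q x = ∑ x, c' x := by
      have h1 : ∑ x, c' x = Pre c' n := by
        unfold Pre; rw [Finset.filter_true_of_mem (fun x _ => x.2)]
      have h2 : ∑ x, c x = Pre c n := by
        unfold Pre; rw [Finset.filter_true_of_mem (fun x _ => x.2)]
      rw [h1, hc'pre n, ← h2, htot]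
      have hin : (i:ℕ) < n := i.2
      have hjn : (j:ℕ) < n := j.2
      simp [hin, hjn]
    -- the count of differences strictly decreases
    have hcard' : (Finset.univ.filter fun x => q x ≠ c' x).card ≤ d := by
      have hsub : (Finset.univ.filter fun x => q x ≠ c' x) ⊆
          (Finset.univ.filter fun x => q x ≠ c x) := by
        intro x hx
        simp only [mem_filter, mem_univ, true_and] at hx ⊢
        by_cases h1 : x = i
        · subst h1; exact ne_of_lt hqi
        · by_cases h2 : x = j
          · subst h2; exact (ne_of_gt hcj)
          · rw [hc'other x h1 h2] at hx; exact hx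
      have hwit : ∃ x, x ∈ (Finset.univ.filter fun x => q x ≠ c x) ∧
          x ∉ (Finset.univ.filter fun x => q x ≠ c' x) := by
        rcases min_cases (c i - q i) (q j - c j) with ⟨hmin, -⟩ | ⟨hmin, -⟩
        · refine ⟨i, by simp [ne_of_lt hqi], ?_⟩
          simp only [mem_filter, mem_univ, true_and, not_not]
          rw [hc'i, hδdef, hmin]; ring
        · refine ⟨j, by simp [ne_of_gt hcj], ?_⟩
          simp only [mem_filter, mem_univ, true_and, not_not]
          rw [hc'j, hδdef, hmin]; ring
      obtain ⟨x, hx1, hx2⟩ := hwit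
      have := Finset.card_lt_card (Finset.ssubset_iff_of_subset hsub |>.mpr ⟨x, hx1, hx2⟩)
      omega
    obtain ⟨D', hD', hD'c⟩ := ih c' hc' hpre' htot' hcard'
    -- the T-transform matrix
    set lam : ℝ := δ / (c i - c j) with hlam
    have hlam0 : 0 ≤ lam := le_of_lt (div_pos hδ (by linarith))
    have hlam1 : lam ≤ 1 := by
      rw [hlam, div_le_one (by linarith)]
      linarith
    set σ : Equiv.Perm (Fin n) := Equiv.swap i j with hσ
    set T : Matrix (Fin n) (Fin n) ℝ := Matrix.of fun x y =>
      (1 - lam) * (if x = y then 1 else 0) + lam * (if σ x = y then 1 else 0) with hT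
    have hTS : DStoch T := by
      refine ⟨fun x y => ?_, fun x => ?_, fun y => ?_⟩
      · have h1 : (0:ℝ) ≤ (if x = y then (1:ℝ) else 0) := by positivity
        have h2 : (0:ℝ) ≤ (if σ x = y then (1:ℝ) else 0) := by positivity
        have : (0:ℝ) ≤ 1 - lam := by linarith
        simp only [hT, Matrix.of_apply]
        positivity
      · simp only [hT, Matrix.of_apply]
        rw [Finset.sum_add_distrib, ← Finset.mul_sum, ← Finset.mul_sum]
        rw [Finset.sum_ite_eq _ x (fun _ => (1:ℝ)), Finset.sum_ite_eq _ (σ x) (fun _ => (1:ℝ))]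
        simp
      · simp only [hT, Matrix.of_apply]
        rw [Finset.sum_add_distrib, ← Finset.mul_sum, ← Finset.mul_sum]
        have e1 : ∑ x : Fin n, (if x = y then (1:ℝ) else 0) = 1 := by
          rw [Finset.sum_ite_eq' _ y (fun _ => (1:ℝ))]; simp
        have e2 : ∑ x : Fin n, (if σ x = y then (1:ℝ) else 0) = 1 := by
          have h := Equiv.sum_comp σ (fun z : Fin n => if z = y then (1:ℝ) else 0)
          rw [show (fun x : Fin n => if σ x = y then (1:ℝ) else 0)
              = fun x : Fin n => (fun z : Fin n => if z = y then (1:ℝ) else 0) (σ x) from rfl]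
          rw [h, Finset.sum_ite_eq' _ y (fun _ => (1:ℝ))]
          simp
        rw [e1, e2]; ring
    have hld : lam * (c i - c j) = δ := by
      rw [hlam]
      exact div_mul_cancel₀ δ (ne_of_gt (by linarith))
    have hTc : ∀ x, c' x = ∑ y, T x y * c y := by
      intro x
      have expand : ∑ y, T x y * c y = (1 - lam) * c x + lam * c (σ x) := by
        simp only [hT, Matrix.of_apply]
        simp_rw [add_mul, mul_assoc, ite_mul, one_mul, zero_mul]
        rw [Finset.sum_add_distrib, ← Finset.mul_sum, ← Finset.mul_sum,
          Finset.sum_ite_eq _ x (fun y => c y), Finset.sum_ite_eq _ (σ x) (fun y => c y)]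
        simp
      rw [expand]
      by_cases h1 : x = i
      · rw [h1, hc'i, show σ i = j from Equiv.swap_apply_left i j]
        linear_combination hld
      · by_cases h2 : x = j
        · rw [h2, hc'j, show σ j = i from Equiv.swap_apply_right i j]
          linear_combination -hld
        · rw [hc'other x h1 h2, show σ x = x from Equiv.swap_apply_of_ne_of_ne h1 h2]
          ring
    refine ⟨D' * T, ?_, ?_⟩
    · obtain ⟨g0, gr, gc⟩ := hD'
      obtain ⟨g0', gr', gc'⟩ := hTS
      refine ⟨fun x y => ?_, fun x => ?_, fun y => ?_⟩
      · rw [Matrix.mul_apply]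
        exact Finset.sum_nonneg fun k _ => mul_nonneg (g0 x k) (g0' k y)
      · simp_rw [Matrix.mul_apply]
        rw [Finset.sum_comm]
        have : ∀ k : Fin n, ∑ y : Fin n, D' x k * T k y = D' x k := by
          intro k; rw [← Finset.mul_sum, gr' k, mul_one]
        rw [Finset.sum_congr rfl (fun k _ => this k)]
        exact gr x
      · simp_rw [Matrix.mul_apply]
        rw [Finset.sum_comm]
        have : ∀ k : Fin n, ∑ x : Fin n, D' x k * T k y = T k y := by
          intro k; rw [← Finset.sum_mul, gc k, one_mul]
        rw [Finset.sum_congr rfl (fun k _ => this k)]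
        exact gc' y
    · intro x
      have e : ∑ y, (D' * T) x y * c y = ∑ k, D' x k * c' k := by
        simp_rw [Matrix.mul_apply, Finset.sum_mul]
        rw [Finset.sum_comm]
        apply Finset.sum_congr rfl
        intro k _
        rw [hTc k, Finset.mul_sum]
        apply Finset.sum_congr rfl
        intro y _
        ring
      rw [e]
      exact hD'c x

section Bridge
variable {n m : ℕ} (P : Matrix (Fin n) (Fin 2) ℝ) (Q : Matrix (Fin n) (Fin m) ℝ)

lemma filter_le_eq (k : Fin n) :
    Finset.univ.filter (fun x : Fin n => x ≤ k)
      = Finset.univ.filter (fun x : Fin n => (x:ℕ) < (k:ℕ)+1) := by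
  ext x
  simp only [Finset.mem_filter, Finset.mem_univ, true_and, Fin.le_def]
  omega

lemma mu_eq (k : Fin n) : muP P k
    = Pre (fun x => P x 0) ((k:ℕ)+1) / ColSum P 0
      - Pre (fun x => P x 1) ((k:ℕ)+1) / ColSum P 1 := by
  unfold muP Pre
  rw [filter_le_eq, Finset.sum_sub_distrib, ← Finset.sum_div, ← Finset.sum_div]

lemma nu_eq (w : Fin m) (k : Fin n) : nuPQ P Q w k
    = Pre (fun x => Q x w) ((k:ℕ)+1) / ColSum Q w
      - Pre (fun x => P x 1) ((k:ℕ)+1) / ColSum P 1 := by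
  unfold nuPQ Pre
  rw [filter_le_eq, Finset.sum_sub_distrib, ← Finset.sum_div, ← Finset.sum_div]

lemma Pre_zero (v : Fin n → ℝ) : Pre v 0 = 0 := by
  unfold Pre
  rw [Finset.filter_false_of_mem (fun x _ => by omega)]
  simp

lemma Pre_of_ge (v : Fin n → ℝ) {K : ℕ} (h : n ≤ K) : Pre v K = ∑ x, v x := by
  unfold Pre
  rw [Finset.filter_true_of_mem (fun x _ => lt_of_lt_of_le x.2 h)]

lemma colsum_pair (hP : JointProb P) : ColSum P 0 + ColSum P 1 = 1 := by
  unfold ColSum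
  rw [← Finset.sum_add_distrib, ← hP.2]
  apply Finset.sum_congr rfl
  intro x _
  rw [Fin.sum_univ_two]

lemma colsumQ_pos (hQ : JointProb Q) (hQstd : StdForm Q) (w : Fin m) : 0 < ColSum Q w := by
  obtain ⟨x, hx⟩ := hQstd.2.1 w
  exact Finset.sum_pos' (fun i _ => hQ.1 i w)
    ⟨x, Finset.mem_univ x, lt_of_le_of_ne (hQ.1 x w) (Ne.symm hx)⟩

lemma colsumQ_sum (hQ : JointProb Q) : ∑ w, ColSum Q w = 1 := by
  unfold ColSum
  rw [Finset.sum_comm]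
  exact hQ.2

lemma tripleEntry (D : Matrix (Fin n) (Fin n) ℝ) (R : Matrix (Fin 2) (Fin m) ℝ)
    (x : Fin n) (w : Fin m) :
    (D * P * R) x w = ∑ i, D x i * (P i 0 * R 0 w + P i 1 * R 1 w) := by
  rw [Matrix.mul_assoc, Matrix.mul_apply]
  apply Finset.sum_congr rfl
  intro i _
  rw [Matrix.mul_apply, Fin.sum_univ_two]

lemma scale_le {p q X U : ℝ} (hp : 0 < p) (hq : 0 < q) :
    (q / p * X ≤ U) ↔ X ≤ U * p / q := by
  rw [div_mul_eq_mul_div, div_le_iff₀ hp, le_div_iff₀ hq, mul_comm X q]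

lemma scale_ge {p q X U : ℝ} (hp : 0 < p) (hq : 0 < q) :
    (U ≤ q / p * X) ↔ U * p / q ≤ X := by
  rw [div_mul_eq_mul_div, le_div_iff₀ hp, div_le_iff₀ hq, mul_comm X q]

end Bridge

section Step1
variable {n m : ℕ} (P : Matrix (Fin n) (Fin 2) ℝ) (Q : Matrix (Fin n) (Fin m) ℝ)

lemma condMaj_iff_t (hP : JointProb P) (hQ : JointProb Q)
    (hPstd : StdForm P) (hQstd : StdForm Q)
    (hp0 : 0 < ColSum P 0) (hp1 : ColSum P 0 < 1) :
    CondMaj P Q ↔ ∃ t : Fin m → ℝ,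
      (∀ w, 0 ≤ t w ∧ t w ≤ 1 ∧ ∀ k : Fin n, nuPQ P Q w k ≤ t w * muP P k) ∧
      ∑ w, t w * ColSum Q w = ColSum P 0 := by
  have hpair := colsum_pair P hP
  have hpbar : 0 < ColSum P 1 := by linarith
  have hqpos : ∀ w, 0 < ColSum Q w := colsumQ_pos Q hQ hQstd
  have hqsum : ∑ w, ColSum Q w = 1 := colsumQ_sum Q hQ
  constructor
  · rintro ⟨J, D, R, hD, hR0, hRS, hQeq⟩
    set A : Fin m → ℝ := fun w => ∑ j, R j 0 w with hA
    set B : Fin m → ℝ := fun w => ∑ j, R j 1 w with hB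
    have hA0 : ∀ w, 0 ≤ A w := fun w => Finset.sum_nonneg fun j _ => hR0 j 0 w
    have hB0 : ∀ w, 0 ≤ B w := fun w => Finset.sum_nonneg fun j _ => hR0 j 1 w
    have hAsum : ∑ w, A w = 1 := by
      have h := hRS.2 0
      simp only [Matrix.sum_apply] at h
      exact h
    have hQentry : ∀ x w, Q x w = ∑ j, ∑ i, D j x i * (P i 0 * R j 0 w + P i 1 * R j 1 w) := by
      intro x w
      rw [hQeq]
      simp only [Matrix.sum_apply]
      exact Finset.sum_congr rfl fun j _ => tripleEntry P (D j) (R j) x w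
    -- the per-j column vectors are nonincreasing
    have hvmono : ∀ (j : Fin J) (w : Fin m) (x x' : Fin n), x ≤ x' →
        P x' 0 * R j 0 w + P x' 1 * R j 1 w ≤ P x 0 * R j 0 w + P x 1 * R j 1 w := by
      intro j w x x' hxx
      have h0 := hPstd.1 0 x x' hxx
      have h1 := hPstd.1 1 x x' hxx
      have := hR0 j 0 w
      have := hR0 j 1 w
      nlinarith
    -- prefix bound
    have hPre : ∀ (w : Fin m) (K : ℕ), K ≤ n →
        Pre (fun x => Q x w) K ≤ A w * Pre (fun x => P x 0) K + B w * Pre (fun x => P x 1) K := by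
      intro w K hK
      have h1 : Pre (fun x => Q x w) K = ∑ j, Pre (fun x => ∑ i, D j x i *
          (P i 0 * R j 0 w + P i 1 * R j 1 w)) K := by
        unfold Pre
        rw [Finset.sum_comm]
        exact Finset.sum_congr rfl fun x _ => hQentry x w
      have h2 : ∀ j : Fin J, Pre (fun x => ∑ i, D j x i *
          (P i 0 * R j 0 w + P i 1 * R j 1 w)) K ≤
          Pre (fun i => P i 0 * R j 0 w + P i 1 * R j 1 w) K :=
        fun j => lemB (D j) (hD j).1 (hD j).2.1 (hD j).2.2 _ (hvmono j w) K hK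
      have h3 : ∑ j, Pre (fun i => P i 0 * R j 0 w + P i 1 * R j 1 w) K
          = A w * Pre (fun x => P x 0) K + B w * Pre (fun x => P x 1) K := by
        unfold Pre
        rw [Finset.sum_comm]
        rw [Finset.mul_sum, Finset.mul_sum, ← Finset.sum_add_distrib]
        apply Finset.sum_congr rfl
        intro x _
        rw [Finset.sum_add_distrib, ← Finset.mul_sum, ← Finset.mul_sum, hA, hB]
        simp only
        ring
      rw [h1, ← h3]
      exact Finset.sum_le_sum fun j _ => h2 j
    -- exact total
    have hTot : ∀ w, ColSum Q w = A w * ColSum P 0 + B w * ColSum P 1 := by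
      intro w
      unfold ColSum
      calc ∑ x, Q x w
          = ∑ j, ∑ x : Fin n, ∑ i, D j x i * (P i 0 * R j 0 w + P i 1 * R j 1 w) := by
            rw [Finset.sum_comm]
            exact Finset.sum_congr rfl fun x _ => hQentry x w
        _ = ∑ j, ∑ i, (∑ x, D j x i) * (P i 0 * R j 0 w + P i 1 * R j 1 w) := by
            apply Finset.sum_congr rfl
            intro j _
            rw [Finset.sum_comm]
            exact Finset.sum_congr rfl fun i _ => (Finset.sum_mul _ _ _).symm
        _ = ∑ j, ∑ i, (P i 0 * R j 0 w + P i 1 * R j 1 w) := by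
            apply Finset.sum_congr rfl
            intro j _
            exact Finset.sum_congr rfl fun i _ => by rw [(hD j).2.2 i, one_mul]
        _ = ∑ j, (R j 0 w * ∑ i, P i 0 + R j 1 w * ∑ i, P i 1) := by
            apply Finset.sum_congr rfl
            intro j _
            rw [Finset.sum_add_distrib, Finset.mul_sum, Finset.mul_sum]
            congr 1 <;> exact Finset.sum_congr rfl fun i _ => by ring
        _ = A w * ColSum P 0 + B w * ColSum P 1 := by
            rw [Finset.sum_add_distrib]
            unfold ColSum
            rw [← Finset.sum_mul, ← Finset.sum_mul]
    refine ⟨fun w => A w * ColSum P 0 / ColSum Q w, fun w => ?_, ?_⟩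
    · refine ⟨div_nonneg (mul_nonneg (hA0 w) (le_of_lt hp0)) (le_of_lt (hqpos w)), ?_, ?_⟩
      · rw [div_le_one (hqpos w), hTot w]
        nlinarith [hB0 w]
      · intro k
        have hK : (k:ℕ)+1 ≤ n := k.2
        have E := hPre w ((k:ℕ)+1) hK
        rw [nu_eq, mu_eq]
        set a := Pre (fun x => Q x w) ((k:ℕ)+1) with ha
        set b0 := Pre (fun x => P x 0) ((k:ℕ)+1) with hb0
        set b1 := Pre (fun x => P x 1) ((k:ℕ)+1) with hb1
        have hqne : ColSum Q w ≠ 0 := ne_of_gt (hqpos w)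
        have identity : a / ColSum Q w - b1 / ColSum P 1
            - (A w * ColSum P 0 / ColSum Q w) * (b0 / ColSum P 0 - b1 / ColSum P 1)
            = (a - (A w * b0 + B w * b1)) / ColSum Q w := by
          rw [hTot w]
          have h1 : A w * ColSum P 0 + B w * ColSum P 1 ≠ 0 := by
            rw [← hTot w]; exact hqne
          field_simp
          ring
        have h5 : (a - (A w * b0 + B w * b1)) / ColSum Q w ≤ 0 :=
          div_nonpos_of_nonpos_of_nonneg (by linarith) (le_of_lt (hqpos w))
        linarith
    · have : ∀ w, A w * ColSum P 0 / ColSum Q w * ColSum Q w = A w * ColSum P 0 :=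
        fun w => div_mul_cancel₀ _ (ne_of_gt (hqpos w))
      rw [Finset.sum_congr rfl fun w _ => this w, ← Finset.sum_mul, hAsum, one_mul]
  · rintro ⟨t, ht, htsum⟩
    set A : Fin m → ℝ := fun w => t w * ColSum Q w / ColSum P 0 with hA
    set B : Fin m → ℝ := fun w => (1 - t w) * ColSum Q w / ColSum P 1 with hB
    have hA0 : ∀ w, 0 ≤ A w := fun w =>
      div_nonneg (mul_nonneg (ht w).1 (le_of_lt (hqpos w))) (le_of_lt hp0)
    have hB0 : ∀ w, 0 ≤ B w := fun w =>
      div_nonneg (mul_nonneg (by linarith [(ht w).2.1]) (le_of_lt (hqpos w))) (le_of_lt hpbar)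
    have hAsum : ∑ w, A w = 1 := by
      rw [hA]
      simp only
      rw [← Finset.sum_div, htsum, div_self (ne_of_gt hp0)]
    have hBsum : ∑ w, B w = 1 := by
      rw [hB]
      simp only
      rw [← Finset.sum_div]
      have : ∑ w, (1 - t w) * ColSum Q w = ColSum P 1 := by
        have h2 : ∑ w, (1 - t w) * ColSum Q w
            = ∑ w, ColSum Q w - ∑ w, t w * ColSum Q w := by
          rw [← Finset.sum_sub_distrib]
          exact Finset.sum_congr rfl fun w _ => by ring
        rw [h2, hqsum, htsum]
        linarith
      rw [this, div_self (ne_of_gt hpbar)]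
    set cv : Fin m → Fin n → ℝ := fun w i => A w * P i 0 + B w * P i 1 with hcv
    have hcvmono : ∀ w, ∀ x x' : Fin n, x ≤ x' → cv w x' ≤ cv w x := by
      intro w x x' hxx
      have h0 := hPstd.1 0 x x' hxx
      have h1 := hPstd.1 1 x x' hxx
      have := hA0 w
      have := hB0 w
      simp only [hcv]
      nlinarith
    have hcvtot : ∀ w, ∑ i, cv w i = ColSum Q w := by
      intro w
      simp only [hcv]
      rw [Finset.sum_add_distrib, ← Finset.mul_sum, ← Finset.mul_sum]
      have e0 : ∑ i, P i 0 = ColSum P 0 := rfl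
      have e1 : ∑ i, P i 1 = ColSum P 1 := rfl
      rw [e0, e1, hA, hB]
      simp only
      field_simp
      ring
    have hcvpre : ∀ w (K : ℕ), Pre (fun x => Q x w) K ≤ Pre (cv w) K := by
      intro w K
      rcases Nat.lt_or_ge K (n+1) with hK | hK
      · rcases Nat.eq_zero_or_pos K with h0 | h0
        · rw [h0, Pre_zero, Pre_zero]
        · set k : Fin n := ⟨K-1, by omega⟩ with hk
          have hKk : K = (k:ℕ)+1 := by simp [hk]; omega
          have hνμ := (ht w).2.2 k
          rw [nu_eq, mu_eq] at hνμ
          have hccalc : Pre (cv w) K = A w * Pre (fun x => P x 0) K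
              + B w * Pre (fun x => P x 1) K := by
            unfold Pre
            rw [Finset.mul_sum, Finset.mul_sum, ← Finset.sum_add_distrib]
          rw [hccalc, hKk]
          set a := Pre (fun x => Q x w) ((k:ℕ)+1) with ha
          set b0 := Pre (fun x => P x 0) ((k:ℕ)+1) with hb0
          set b1 := Pre (fun x => P x 1) ((k:ℕ)+1) with hb1
          have identity : a - (A w * b0 + B w * b1)
              = ColSum Q w * ((a / ColSum Q w - b1 / ColSum P 1)
                - t w * (b0 / ColSum P 0 - b1 / ColSum P 1)) := by
            rw [hA, hB]
            simp only
            field_simp [ne_of_gt (hqpos w), ne_of_gt hp0, ne_of_gt hpbar]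
            ring
          have h6 : (a / ColSum Q w - b1 / ColSum P 1)
              - t w * (b0 / ColSum P 0 - b1 / ColSum P 1) ≤ 0 := by linarith
          nlinarith [hqpos w]
      · rw [Pre_of_ge _ (by omega), Pre_of_ge _ (by omega), hcvtot w]
        rfl
    have hDex : ∀ w, ∃ D : Matrix (Fin n) (Fin n) ℝ, DStoch D ∧
        ∀ x, Q x w = ∑ i, D x i * cv w i := by
      intro w
      apply hlp (fun x => Q x w) (hQstd.1 w) _ (cv w) (hcvmono w) (hcvpre w)
      · rw [hcvtot w]; rfl
      · exact le_refl _
    choose D hDS hDq using hDex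
    refine ⟨m, D, fun w => Matrix.of fun y w' =>
      if w' = w then (if y = 0 then A w else B w) else 0, hDS, ?_, ?_, ?_⟩
    · intro j y w'
      simp only [Matrix.of_apply]
      by_cases h1 : w' = j <;> by_cases h2 : y = 0 <;>
        simp [h1, h2, hA0 j, hB0 j]
    · constructor
      · intro y w'
        rw [Matrix.sum_apply]
        apply Finset.sum_nonneg
        intro j _
        simp only [Matrix.of_apply]
        by_cases h1 : w' = j <;> by_cases h2 : y = 0 <;>
          simp [h1, h2, hA0 j, hB0 j]
      · intro y
        have hrow : ∀ w' : Fin m, (∑ j, (Matrix.of fun y' w'' =>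
            if w'' = j then (if y' = 0 then A j else B j) else 0 : Matrix (Fin 2) (Fin m) ℝ)) y w'
            = (if y = 0 then A w' else B w') := by
          intro w'
          rw [Matrix.sum_apply]
          simp only [Matrix.of_apply]
          rw [Finset.sum_ite_eq _ w' (fun j => if y = 0 then A j else B j)]
          simp
        rw [Finset.sum_congr rfl fun w' _ => hrow w']
        by_cases h2 : y = 0
        · simp only [h2, if_pos]
          exact hAsum
        · simp only [h2, if_neg, not_false_iff]
          exact hBsum
    · funext x w'
      rw [Matrix.sum_apply]
      have hterm : ∀ w : Fin m, (D w * P * (Matrix.of fun (y : Fin 2) (w'' : Fin m) =>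
          if w'' = w then (if y = 0 then A w else B w) else 0)) x w'
          = if w' = w then ∑ i, D w x i * cv w i else 0 := by
        intro w
        rw [tripleEntry]
        by_cases h : w' = w
        · rw [if_pos h]
          apply Finset.sum_congr rfl
          intro i _
          simp only [Matrix.of_apply, h, if_pos rfl, hcv]
          norm_num
          left
          ring
        · rw [if_neg h]
          apply Finset.sum_eq_zero
          intro i _
          simp only [Matrix.of_apply, h, if_neg, if_false]
          simp [h]
      rw [Finset.sum_congr rfl fun w _ => hterm w,
        Finset.sum_ite_eq _ w' (fun w => ∑ i, D w x i * cv w i)]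
      simp only [Finset.mem_univ, if_pos]
      exact hDq w' x

end Step1

section Step2
variable {n m : ℕ} (P : Matrix (Fin n) (Fin 2) ℝ) (Q : Matrix (Fin n) (Fin m) ℝ)

lemma tIff (w : Fin m) (t : ℝ) :
    (0 ≤ t ∧ t ≤ 1 ∧ ∀ k, nuPQ P Q w k ≤ t * muP P k) ↔
    ((∀ k, muP P k = 0 → nuPQ P Q w k ≤ 0) ∧
     (insert (0:ℝ) ((Finset.univ.filter fun k => 0 < muP P k).image
        fun k => nuPQ P Q w k / muP P k)).max' (Finset.insert_nonempty _ _) ≤ t ∧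
     t ≤ (insert (1:ℝ) ((Finset.univ.filter fun k => muP P k < 0).image
        fun k => nuPQ P Q w k / muP P k)).min' (Finset.insert_nonempty _ _)) := by
  constructor
  · rintro ⟨h0, h1, hk⟩
    refine ⟨fun k hk0 => by simpa [hk0] using hk k, ?_, ?_⟩
    · apply Finset.max'_le
      intro y hy
      rcases Finset.mem_insert.mp hy with rfl | hy
      · exact h0
      · obtain ⟨k, hkmem, rfl⟩ := Finset.mem_image.mp hy
        have hμ : 0 < muP P k := (Finset.mem_filter.mp hkmem).2
        rw [div_le_iff₀ hμ]
        have := hk k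
        linarith
    · apply Finset.le_min'
      intro y hy
      rcases Finset.mem_insert.mp hy with rfl | hy
      · exact h1
      · obtain ⟨k, hkmem, rfl⟩ := Finset.mem_image.mp hy
        have hμ : muP P k < 0 := (Finset.mem_filter.mp hkmem).2
        rw [le_div_iff_of_neg hμ]
        have := hk k
        linarith
  · rintro ⟨hzero, ha, hb⟩
    have h0 : (0:ℝ) ≤ t :=
      le_trans (Finset.le_max' _ 0 (Finset.mem_insert_self _ _)) ha
    have h1 : t ≤ 1 :=
      le_trans hb (Finset.min'_le _ 1 (Finset.mem_insert_self _ _))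
    refine ⟨h0, h1, fun k => ?_⟩
    rcases lt_trichotomy (muP P k) 0 with hμ | hμ | hμ
    · have hmem : nuPQ P Q w k / muP P k ∈
          insert (1:ℝ) ((Finset.univ.filter fun k => muP P k < 0).image
            fun k => nuPQ P Q w k / muP P k) :=
        Finset.mem_insert_of_mem (Finset.mem_image_of_mem _
          (Finset.mem_filter.mpr ⟨Finset.mem_univ k, hμ⟩))
      have := le_trans hb (Finset.min'_le _ _ hmem)
      rw [le_div_iff_of_neg hμ] at this
      linarith
    · rw [hμ, mul_zero]
      exact hzero k hμ
    · have hmem : nuPQ P Q w k / muP P k ∈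
          insert (0:ℝ) ((Finset.univ.filter fun k => 0 < muP P k).image
            fun k => nuPQ P Q w k / muP P k) :=
        Finset.mem_insert_of_mem (Finset.mem_image_of_mem _
          (Finset.mem_filter.mpr ⟨Finset.mem_univ k, hμ⟩))
      have := le_trans (Finset.le_max' _ _ hmem) ha
      rw [div_le_iff₀ hμ] at this
      linarith

lemma exists_t_iff (hP : JointProb P) (hQ : JointProb Q)
    (hPstd : StdForm P) (hQstd : StdForm Q)
    (hp0 : 0 < ColSum P 0) (hp1 : ColSum P 0 < 1) :
    (∃ t : Fin m → ℝ,
      (∀ w, 0 ≤ t w ∧ t w ≤ 1 ∧ ∀ k : Fin n, nuPQ P Q w k ≤ t w * muP P k) ∧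
      ∑ w, t w * ColSum Q w = ColSum P 0) ↔
    ((∀ w k, muP P k = 0 → nuPQ P Q w k ≤ 0) ∧
     (∀ w, alphaW P Q w ≤ betaW P Q w) ∧
     (∑ w, alphaW P Q w ≤ 1) ∧
     (1 ≤ ∑ w, betaW P Q w)) := by
  have hqpos : ∀ w, 0 < ColSum Q w := colsumQ_pos Q hQ hQstd
  -- notation for the max'/min' terms
  set av : Fin m → ℝ := fun w =>
    (insert (0:ℝ) ((Finset.univ.filter fun k => 0 < muP P k).image
      fun k => nuPQ P Q w k / muP P k)).max' (Finset.insert_nonempty _ _) with hav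
  set bv : Fin m → ℝ := fun w =>
    (insert (1:ℝ) ((Finset.univ.filter fun k => muP P k < 0).image
      fun k => nuPQ P Q w k / muP P k)).min' (Finset.insert_nonempty _ _) with hbv
  have halpha : ∀ w, alphaW P Q w = (ColSum Q w / ColSum P 0) * av w := fun w => rfl
  have hbeta : ∀ w, betaW P Q w = (ColSum Q w / ColSum P 0) * bv w := fun w => rfl
  constructor
  · rintro ⟨t, ht, htsum⟩
    have hw : ∀ w, (∀ k, muP P k = 0 → nuPQ P Q w k ≤ 0) ∧ av w ≤ t w ∧ t w ≤ bv w :=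
      fun w => (tIff P Q w (t w)).mp (ht w)
    have hscale : ∀ w, (0:ℝ) ≤ ColSum Q w / ColSum P 0 :=
      fun w => div_nonneg (le_of_lt (hqpos w)) (le_of_lt hp0)
    refine ⟨fun w => (hw w).1, fun w => ?_, ?_, ?_⟩
    · rw [halpha, hbeta]
      exact mul_le_mul_of_nonneg_left (le_trans (hw w).2.1 (hw w).2.2) (hscale w)
    · have step : ∀ w, alphaW P Q w ≤ ColSum Q w / ColSum P 0 * t w := by
        intro w
        rw [halpha]
        exact mul_le_mul_of_nonneg_left (hw w).2.1 (hscale w)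
      calc ∑ w, alphaW P Q w ≤ ∑ w, ColSum Q w / ColSum P 0 * t w :=
            Finset.sum_le_sum fun w _ => step w
        _ = 1 := by
            rw [Finset.sum_congr rfl fun w _ =>
              show ColSum Q w / ColSum P 0 * t w = t w * ColSum Q w / ColSum P 0 by ring]
            rw [← Finset.sum_div, htsum, div_self (ne_of_gt hp0)]
    · have step : ∀ w, ColSum Q w / ColSum P 0 * t w ≤ betaW P Q w := by
        intro w
        rw [hbeta]
        exact mul_le_mul_of_nonneg_left (hw w).2.2 (hscale w)
      calc (1:ℝ) = ∑ w, ColSum Q w / ColSum P 0 * t w := by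
            rw [Finset.sum_congr rfl fun w _ =>
              show ColSum Q w / ColSum P 0 * t w = t w * ColSum Q w / ColSum P 0 by ring]
            rw [← Finset.sum_div, htsum, div_self (ne_of_gt hp0)]
        _ ≤ ∑ w, betaW P Q w := Finset.sum_le_sum fun w _ => step w
  · rintro ⟨hzero, hab, hsa, hsb⟩
    -- choose u w with alphaW ≤ u ≤ betaW and ∑ u = 1
    have hexu : ∃ u : Fin m → ℝ, (∀ w, alphaW P Q w ≤ u w ∧ u w ≤ betaW P Q w) ∧
        ∑ w, u w = 1 := by
      by_cases hcase : ∑ w, alphaW P Q w = ∑ w, betaW P Q w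
      · refine ⟨fun w => alphaW P Q w, fun w => ⟨le_refl _, hab w⟩, ?_⟩
        linarith
      · have hlt : ∑ w, alphaW P Q w < ∑ w, betaW P Q w :=
          lt_of_le_of_ne (Finset.sum_le_sum fun w _ => hab w) hcase
        set lam : ℝ := (∑ w, betaW P Q w - 1) / (∑ w, betaW P Q w - ∑ w, alphaW P Q w)
          with hlamdef
        have hden : 0 < ∑ w, betaW P Q w - ∑ w, alphaW P Q w := by linarith
        have hlam0 : 0 ≤ lam := div_nonneg (by linarith) (le_of_lt hden)
        have hlam1 : lam ≤ 1 := by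
          rw [hlamdef, div_le_one hden]
          linarith
        refine ⟨fun w => lam * alphaW P Q w + (1 - lam) * betaW P Q w, fun w => ⟨?_, ?_⟩, ?_⟩
        · simp only
          nlinarith [hab w, hlam0, hlam1]
        · simp only
          nlinarith [hab w, hlam0, hlam1]
        · rw [Finset.sum_add_distrib, ← Finset.mul_sum, ← Finset.mul_sum, hlamdef]
          field_simp
          ring
    obtain ⟨u, hu, husum⟩ := hexu
    refine ⟨fun w => u w * ColSum P 0 / ColSum Q w, fun w => ?_, ?_⟩
    · apply (tIff P Q w _).mpr
      refine ⟨hzero w, ?_, ?_⟩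
      · rw [← scale_le hp0 (hqpos w)]
        exact (hu w).1
      · rw [← scale_ge hp0 (hqpos w)]
        exact (hu w).2
    · have : ∀ w, u w * ColSum P 0 / ColSum Q w * ColSum Q w = u w * ColSum P 0 :=
        fun w => div_mul_cancel₀ _ (ne_of_gt (hqpos w))
      rw [Finset.sum_congr rfl fun w _ => this w, ← Finset.sum_mul, husum, one_mul]

end Step2

end S14

open S14

theorem stmt14 {n m : ℕ} (P : Matrix (Fin n) (Fin 2) ℝ) (Q : Matrix (Fin n) (Fin m) ℝ)
    (hP : JointProb P) (hQ : JointProb Q) (hPstd : StdForm P) (hQstd : StdForm Q)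
    (hp0 : 0 < ColSum P 0) (hp1 : ColSum P 0 < 1) :
    CondMaj P Q ↔
      ((∀ w k, muP P k = 0 → nuPQ P Q w k ≤ 0) ∧
       (∀ w, alphaW P Q w ≤ betaW P Q w) ∧
       (∑ w, alphaW P Q w ≤ 1) ∧
       (1 ≤ ∑ w, betaW P Q w)) := by
  rw [condMaj_iff_t P Q hP hQ hPstd hQstd hp0 hp1]
  exact exists_t_iff P Q hP hQ hPstd hQstd hp0 hp1
end
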